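/- arXiv:1705.09198 — 3 statements merged into one kernel-verified Lean document; each statement's English description precedes it below -/
import Mathlib

section
/- Under the same assumptions, if F is proper then the canonical strong epimorphism h : φF → ρF is an isomorphism; i.e., φF is the rational fixed point of F. -/
open CategoryTheory CategoryTheory.Limits

/-- A `T`-algebra is finitely presentable if its hom-functor preserves filtered colimits. -/
def IsFP (T : Monad (Type)) (A : T.Algebra) : Prop :=
  ∀ (J : Type) (_ : SmallCategory J) (_ : IsFiltered J),
    Nonempty (PreservesColimitsOfShape J (coyoneda.obj (Opposite.op A)))

/-- An `F`-coalgebra has free finitely generated carrier. -/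
def Pffg (T : Monad (Type)) (F : T.Algebra ⥤ T.Algebra)
    (C : Endofunctor.Coalgebra F) : Prop :=
  ∃ X : Type, Finite X ∧ Nonempty (C.V ≅ T.free.obj X)

/-- An `F`-coalgebra has finitely presentable carrier. -/
def Pfp (T : Monad (Type)) (F : T.Algebra ⥤ T.Algebra)
    (C : Endofunctor.Coalgebra F) : Prop :=
  IsFP T C.V

/-- The coalgebra on a free finitely generated carrier as an object of the full
subcategory. -/
def ffgObj (T : Monad (Type)) (F : T.Algebra ⥤ T.Algebra) (X : Type) (hX : Finite X)
    (c : T.free.obj X ⟶ F.obj (T.free.obj X)) : ObjectProperty.FullSubcategory (Pffg T F) :=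
  ⟨⟨T.free.obj X, c⟩, X, hX, ⟨Iso.refl _⟩⟩

/-- Zig-zag relatedness of elements of coalgebras with free finitely generated
carrier. -/
def ZigzagRel (T : Monad (Type)) (F : T.Algebra ⥤ T.Algebra) :
    (Σ C : ObjectProperty.FullSubcategory (Pffg T F), C.obj.V.A) →
      (Σ C : ObjectProperty.FullSubcategory (Pffg T F), C.obj.V.A) → Prop :=
  Relation.EqvGen (fun p q => ∃ m : p.1 ⟶ q.1, m.hom.f.f p.2 = q.2)

/-- Properness of `F` with respect to a final coalgebra `νF`. -/
def Proper (T : Monad (Type)) (F : T.Algebra ⥤ T.Algebra)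
    (νF : Endofunctor.Coalgebra F) (hν : IsTerminal νF) : Prop :=
  ∀ (X Y : Type) (hX : Finite X) (hY : Finite Y)
    (c : T.free.obj X ⟶ F.obj (T.free.obj X))
    (d : T.free.obj Y ⟶ F.obj (T.free.obj Y)) (x : X) (y : Y),
    (hν.from ⟨T.free.obj X, c⟩).f.f (T.η.app X x) =
      (hν.from ⟨T.free.obj Y, d⟩).f.f (T.η.app Y y) →
    ZigzagRel T F ⟨ffgObj T F X hX c, T.η.app X x⟩ ⟨ffgObj T F Y hY d, T.η.app Y y⟩

namespace ProperAux

variable {T : Monad (Type)}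

def freeExt {X : Type} {B : T.Algebra} (g : X → B.A) : T.free.obj X ⟶ B where
  f := (T : Type ⥤ Type).map (TypeCat.ofHom g) ≫ B.a
  h := by
    show (T : Type ⥤ Type).map ((T : Type ⥤ Type).map (TypeCat.ofHom g) ≫ B.a) ≫ B.a =
      T.μ.app X ≫ (T : Type ⥤ Type).map (TypeCat.ofHom g) ≫ B.a
    rw [Functor.map_comp, Category.assoc, ← B.assoc, ← Category.assoc,
      ← Functor.comp_map, T.μ.naturality, Category.assoc]

@[simp] lemma freeExt_η {X : Type} {B : T.Algebra} (g : X → B.A) (x : X) :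
    (freeExt g).f (T.η.app X x) = g x := by
  have h1 : T.η.app B.A (g x) = (T : Type ⥤ Type).map (TypeCat.ofHom g) (T.η.app X x) :=
    ConcreteCategory.congr_hom (T.η.naturality (TypeCat.ofHom g)) x
  have h2 : B.a (T.η.app B.A (g x)) = g x := ConcreteCategory.congr_hom B.unit (g x)
  show B.a ((T : Type ⥤ Type).map (TypeCat.ofHom g) (T.η.app X x)) = g x
  rw [← h1, h2]

lemma free_hom_val {X : Type} {B : T.Algebra} (u : T.free.obj X ⟶ B) (t : (T.free.obj X).A) :
    u.f t = B.a ((T : Type ⥤ Type).map (T.η.app X ≫ u.f) t) := by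
  have hru : T.μ.app X ((T : Type ⥤ Type).map (T.η.app X) t) = t :=
    ConcreteCategory.congr_hom (T.right_unit X) t
  have hh := ConcreteCategory.congr_hom u.h ((T : Type ⥤ Type).map (T.η.app X) t)
  calc u.f t = u.f (T.μ.app X ((T : Type ⥤ Type).map (T.η.app X) t)) := by rw [hru]
    _ = _ := hh.symm
    _ = _ := congrArg B.a
      (ConcreteCategory.congr_hom ((T : Type ⥤ Type).map_comp (T.η.app X) u.f) t).symm

lemma free_hom_ext {X : Type} {B : T.Algebra} {u v : T.free.obj X ⟶ B}
    (h : ∀ x, u.f (T.η.app X x) = v.f (T.η.app X x)) : u = v := by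
  apply Monad.Algebra.Hom.ext
  apply ConcreteCategory.hom_ext
  intro t
  rw [free_hom_val u t, free_hom_val v t]
  have : (T.η.app X ≫ u.f) = (T.η.app X ≫ v.f) := ConcreteCategory.hom_ext _ _ h
  rw [this]

def finsetDiagram (Y : Type) : Finset Y ⥤ Type where
  obj S := {y // y ∈ S}
  map {S S'} h := TypeCat.ofHom fun (y : {y // y ∈ S}) => (⟨y.1, (leOfHom h) y.2⟩ : {y // y ∈ S'})

def finsetCocone (Y : Type) : Cocone (finsetDiagram Y) where
  pt := Y
  ι := { app := fun S => TypeCat.ofHom fun (y : {y // y ∈ S}) => y.1, naturality := by intros; rfl }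

noncomputable def finsetCoconeIsColimit (Y : Type) : IsColimit (finsetCocone Y) := by
  classical
  apply Types.FilteredColimit.isColimitOf
  · intro y
    exact ⟨{y}, (⟨y, Finset.mem_singleton_self y⟩ : {z // z ∈ ({y} : Finset Y)}), rfl⟩
  · intro i j xi xj hx
    exact ⟨i ∪ j, homOfLE le_sup_left, homOfLE le_sup_right, (Subtype.ext hx : (⟨xi.1, _⟩ : {z // z ∈ i ∪ j}) = ⟨xj.1, _⟩)⟩

lemma finite_support (T : Monad (Type)) [PreservesFilteredColimits (T : Type ⥤ Type)]
    (Y : Type) (t : (T : Type ⥤ Type).obj Y) :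
    ∃ (S : Finset Y) (t₀ : (T : Type ⥤ Type).obj {y // y ∈ S}),
      (T : Type ⥤ Type).map (TypeCat.ofHom fun y => y.1) t₀ = t := by
  classical
  have hc : IsColimit ((T : Type ⥤ Type).mapCocone (finsetCocone Y)) :=
    isColimitOfPreserves _ (finsetCoconeIsColimit Y)
  obtain ⟨S, t₀, h⟩ := Types.jointly_surjective _ hc t
  exact ⟨S, t₀, h⟩

/-! ### Subalgebras -/

def Closed (A : T.Algebra) (R : Set A.A) : Prop :=
  ∀ t : (T : Type ⥤ Type).obj R, A.a ((T : Type ⥤ Type).map (TypeCat.ofHom (Subtype.val : R → A.A)) t) ∈ R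

def subAlg (A : T.Algebra) (R : Set A.A) (hR : Closed A R) : T.Algebra where
  A := R
  a := TypeCat.ofHom fun (t : (T : Type ⥤ Type).obj R) =>
    (⟨A.a ((T : Type ⥤ Type).map (TypeCat.ofHom (Subtype.val : R → A.A)) t), hR t⟩ : R)
  unit := by
    apply ConcreteCategory.hom_ext
    intro r
    apply Subtype.ext
    show A.a ((T : Type ⥤ Type).map (TypeCat.ofHom (Subtype.val : R → A.A)) (T.η.app R r)) = r.1
    have h1 := ConcreteCategory.congr_hom (T.η.naturality (TypeCat.ofHom (Subtype.val : R → A.A))) r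
    simp only [Functor.id_obj, Functor.id_map, types_comp_apply] at h1
    rw [← h1]
    exact ConcreteCategory.congr_hom A.unit r.1
  assoc := by
    apply ConcreteCategory.hom_ext
    intro t
    apply Subtype.ext
    show A.a ((T : Type ⥤ Type).map (TypeCat.ofHom (Subtype.val : R → A.A)) (T.μ.app R t)) = _
    have h1 := ConcreteCategory.congr_hom (T.μ.naturality (TypeCat.ofHom (Subtype.val : R → A.A))) t
    simp only [Functor.comp_obj, Functor.comp_map, types_comp_apply] at h1
    rw [← h1]
    have h2 := ConcreteCategory.congr_hom A.assoc ((T : Type ⥤ Type).map ((T : Type ⥤ Type).map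
      (TypeCat.ofHom (Subtype.val : R → A.A))) t)
    simp only [types_comp_apply] at h2
    rw [h2]
    show A.a ((T : Type ⥤ Type).map A.a ((T : Type ⥤ Type).map ((T : Type ⥤ Type).map
      (TypeCat.ofHom (Subtype.val : R → A.A))) t)) = A.a ((T : Type ⥤ Type).map (TypeCat.ofHom (Subtype.val : R → A.A))
        ((T : Type ⥤ Type).map _ t))
    rw [← FunctorToTypes.map_comp_apply, ← FunctorToTypes.map_comp_apply]
    rfl

def subAlgIncl (A : T.Algebra) (R : Set A.A) (hR : Closed A R) : subAlg A R hR ⟶ A where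
  f := TypeCat.ofHom Subtype.val
  h := rfl

def subAlgHom (A : T.Algebra) {R R' : Set A.A} (hR : Closed A R) (hR' : Closed A R')
    (hsub : R ⊆ R') : subAlg A R hR ⟶ subAlg A R' hR' where
  f := TypeCat.ofHom (Set.inclusion hsub)
  h := by
    apply ConcreteCategory.hom_ext
    intro u
    change (T : Type ⥤ Type).obj R at u
    apply Subtype.ext
    show A.a ((T : Type ⥤ Type).map (TypeCat.ofHom (Subtype.val : R' → A.A))
      ((T : Type ⥤ Type).map (TypeCat.ofHom (Set.inclusion hsub)) u)) = A.a ((T : Type ⥤ Type).map _ u)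
    rw [← FunctorToTypes.map_comp_apply]
    rfl


/-! ### Finitely generated subalgebras -/

def fgSet (A : T.Algebra) (S : Finset A.A) : Set A.A :=
  Set.range (freeExt (fun (y : {y // y ∈ S}) => y.1) : T.free.obj _ ⟶ A).f

lemma mem_fgSet_of_mem (A : T.Algebra) (S : Finset A.A) {a : A.A} (ha : a ∈ S) :
    a ∈ fgSet A S :=
  ⟨T.η.app _ ⟨a, ha⟩, freeExt_η _ _⟩

lemma fgSet_mono (A : T.Algebra) {S S' : Finset A.A} (h : S ⊆ S') :
    fgSet A S ⊆ fgSet A S' := by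
  have he : (freeExt (fun (y : {y // y ∈ S}) => y.1) : T.free.obj _ ⟶ A) =
      T.free.map (TypeCat.ofHom fun (y : {y // y ∈ S}) => (⟨y.1, h y.2⟩ : {y // y ∈ S'})) ≫
        freeExt (fun (y : {y // y ∈ S'}) => y.1) := by
    apply free_hom_ext
    intro x
    rw [freeExt_η]
    show _ = (freeExt _).f ((T : Type ⥤ Type).map _ (T.η.app _ x))
    have h1 := ConcreteCategory.congr_hom (T.η.naturality
      (TypeCat.ofHom fun (y : {y // y ∈ S}) => (⟨y.1, h y.2⟩ : {y // y ∈ S'}))) x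
    simp only [Functor.id_obj, Functor.id_map, types_comp_apply] at h1
    rw [← h1, freeExt_η]
    rfl
  rintro a ⟨t, ht⟩
  refine ⟨(T.free.map (TypeCat.ofHom fun (y : {y // y ∈ S}) => (⟨y.1, h y.2⟩ : {y // y ∈ S'}))).f t, ?_⟩
  rw [← ht, he]
  rfl

lemma fgSet_closed (A : T.Algebra) (S : Finset A.A) : Closed A (fgSet A S) := by
  intro t
  classical
  set e : T.free.obj {y // y ∈ S} ⟶ A := freeExt (fun y => y.1) with hedef
  have hsec : ∀ r : fgSet A S, ∃ u, e.f u = r.1 := fun r => r.2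
  choose sec hsec using hsec
  have h1 : (T : Type ⥤ Type).map (TypeCat.ofHom (Subtype.val : fgSet A S → A.A)) t =
      (T : Type ⥤ Type).map e.f ((T : Type ⥤ Type).map (TypeCat.ofHom sec) t) := by
    rw [← FunctorToTypes.map_comp_apply]
    have : TypeCat.ofHom (Subtype.val : fgSet A S → A.A) = (TypeCat.ofHom sec ≫ e.f) := by
      apply ConcreteCategory.hom_ext
      intro r
      exact (hsec r).symm
    rw [this]
  rw [h1]
  have hh := ConcreteCategory.congr_hom e.h ((T : Type ⥤ Type).map (TypeCat.ofHom sec) t)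
  simp only [types_comp_apply] at hh
  exact ⟨_, hh.symm⟩

def fgDiagram (A : T.Algebra) : Finset A.A ⥤ T.Algebra where
  obj S := subAlg A (fgSet A S) (fgSet_closed A S)
  map {S S'} h := subAlgHom A _ _ (fgSet_mono A (leOfHom h))
  map_id S := by
    apply Monad.Algebra.Hom.ext
    apply ConcreteCategory.hom_ext
    intro u
    rfl
  map_comp f g := by
    apply Monad.Algebra.Hom.ext
    apply ConcreteCategory.hom_ext
    intro u
    rfl

def fgCocone (A : T.Algebra) : Cocone (fgDiagram A) where
  pt := A
  ι :=
    { app := fun S => subAlgIncl A _ (fgSet_closed A S)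
      naturality := fun S S' f => by
        apply Monad.Algebra.Hom.ext
        apply ConcreteCategory.hom_ext
        intro u
        rfl }

noncomputable def fgCoconeIsColimit (A : T.Algebra)
    [PreservesFilteredColimits (T : Type ⥤ Type)] : IsColimit (fgCocone A) := by
  classical
  have hmem : ∀ a : A.A, a ∈ fgSet A {a} := fun a =>
    mem_fgSet_of_mem A _ (Finset.mem_singleton_self a)
  let dfun : ∀ (s : Cocone (fgDiagram A)), A.A → s.pt.A := fun s a =>
    (s.ι.app {a}).f (⟨a, hmem a⟩ : ↥(fgSet A {a}))
  have hcons : ∀ (s : Cocone (fgDiagram A)) (S : Finset A.A) (r : ↥(fgSet A S)),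
      dfun s r.1 = (s.ι.app S).f r := by
    intro s S r
    have h1 : ({r.1} : Finset A.A) ⊆ insert r.1 S :=
      Finset.singleton_subset_iff.mpr (Finset.mem_insert_self _ _)
    have h2 : S ⊆ insert r.1 S := Finset.subset_insert _ _
    have e1 : (s.ι.app {r.1}).f (⟨r.1, hmem r.1⟩ : ↥(fgSet A {r.1}))
        = (s.ι.app (insert r.1 S)).f (⟨r.1, fgSet_mono A h1 (hmem r.1)⟩ : ↥(fgSet A (insert r.1 S))) :=
      (ConcreteCategory.congr_hom (congrArg Monad.Algebra.Hom.f (s.w (homOfLE h1)))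
        (⟨r.1, hmem r.1⟩ : ↥(fgSet A {r.1}))).symm
    have e2 : (s.ι.app S).f r
        = (s.ι.app (insert r.1 S)).f (⟨r.1, fgSet_mono A h2 r.2⟩ : ↥(fgSet A (insert r.1 S))) :=
      (ConcreteCategory.congr_hom (congrArg Monad.Algebra.Hom.f (s.w (homOfLE h2))) r).symm
    show (s.ι.app {r.1}).f (⟨r.1, hmem r.1⟩ : ↥(fgSet A {r.1})) = (s.ι.app S).f r
    rw [e1, e2]
  refine
    { desc := fun s =>
        { f := TypeCat.ofHom (dfun s)
          h := ?_ }
      fac := fun s S => ?_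
      uniq := fun s m hm => ?_ }
  · apply ConcreteCategory.hom_ext
    intro t
    change (T : Type ⥤ Type).obj A.A at t
    obtain ⟨S0, t₀, ht⟩ := finite_support T A.A t
    let jmap : {y // y ∈ S0} → ↥(fgSet A S0) := fun y =>
      ⟨y.1, mem_fgSet_of_mem A S0 y.2⟩
    let t₁ : (T : Type ⥤ Type).obj ↥(fgSet A S0) := (T : Type ⥤ Type).map (TypeCat.ofHom jmap) t₀
    have ht1 : (T : Type ⥤ Type).map (TypeCat.ofHom (Subtype.val : ↥(fgSet A S0) → A.A)) t₁ = t := by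
      rw [← ht]
      show (T : Type ⥤ Type).map _ ((T : Type ⥤ Type).map _ t₀) = _
      rw [← FunctorToTypes.map_comp_apply]
      rfl
    show s.pt.a ((T : Type ⥤ Type).map (TypeCat.ofHom (dfun s)) t) = dfun s (A.a t)
    have hval : A.a t = ((subAlg A (fgSet A S0) (fgSet_closed A S0)).a t₁).1 := by
      rw [← ht1]
      rfl
    have hv2 := (congrArg (dfun s) hval).trans (hcons s S0 _)
    have hleg := ConcreteCategory.congr_hom (s.ι.app S0).h t₁
    have hmap : (T : Type ⥤ Type).map (TypeCat.ofHom (dfun s)) t = (T : Type ⥤ Type).map (s.ι.app S0).f t₁ := by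
      rw [← ht1, ← FunctorToTypes.map_comp_apply]
      have : (TypeCat.ofHom (Subtype.val : ↥(fgSet A S0) → A.A) ≫ TypeCat.ofHom (dfun s)) = (s.ι.app S0).f := by
        apply ConcreteCategory.hom_ext
        intro r
        exact hcons s S0 r
      rw [this]
      rfl
    exact (congrArg s.pt.a hmap).trans (hleg.trans hv2.symm)
  · apply Monad.Algebra.Hom.ext
    apply ConcreteCategory.hom_ext
    intro r
    exact hcons s S r
  · apply Monad.Algebra.Hom.ext
    apply ConcreteCategory.hom_ext
    intro a
    exact ConcreteCategory.congr_hom (congrArg Monad.Algebra.Hom.f (hm {a}))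
      (⟨a, hmem a⟩ : ↥(fgSet A {a}))

lemma exists_free_cover (T : Monad (Type)) [PreservesFilteredColimits (T : Type ⥤ Type)]
    (A : T.Algebra) (hA : IsFP T A) :
    ∃ (X : Type) (_ : Finite X) (e : T.free.obj X ⟶ A), Function.Surjective e.f := by
  classical
  obtain ⟨P⟩ := hA (Finset A.A) inferInstance inferInstance
  have hc : IsColimit ((coyoneda.obj (Opposite.op A)).mapCocone (fgCocone A)) :=
    isColimitOfPreserves _ (fgCoconeIsColimit A)
  obtain ⟨S, g, hg⟩ := Types.jointly_surjective _ hc (𝟙 A)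
  have hsa : ∀ a : A.A, a ∈ fgSet A S := by
    intro a
    have h2 : (g.f a).1 = a := by
      have := ConcreteCategory.congr_hom (congrArg Monad.Algebra.Hom.f hg) a
      exact this
    exact h2 ▸ (g.f a).2
  refine ⟨{y // y ∈ S}, inferInstance, freeExt (fun y => y.1), ?_⟩
  intro a
  obtain ⟨t, ht⟩ := hsa a
  exact ⟨t, ht⟩


lemma merge_maps {J : Type} [SmallCategory J] [IsFiltered J] (K : J ⥤ Type)
    {i j : J} {X : Type} [Finite X] (xi : X → K.obj i) (xj : X → K.obj j)
    (hx : ∀ a : X, ∃ (k : J) (f : i ⟶ k) (g : j ⟶ k), K.map f (xi a) = K.map g (xj a)) :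
    ∃ (k : J) (f : i ⟶ k) (g : j ⟶ k), ∀ a : X, K.map f (xi a) = K.map g (xj a) := by
  classical
  cases nonempty_fintype X
  suffices h : ∀ s : Finset X, ∃ (k : J) (f : i ⟶ k) (g : j ⟶ k),
      ∀ a ∈ s, K.map f (xi a) = K.map g (xj a) by
    obtain ⟨k, f, g, hk⟩ := h Finset.univ
    exact ⟨k, f, g, fun a => hk a (Finset.mem_univ a)⟩
  intro s
  induction s using Finset.induction_on with
  | empty =>
      obtain ⟨k, f, g, -⟩ := IsFilteredOrEmpty.cocone_objs i j
      exact ⟨k, f, g, by simp⟩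
  | @insert a s ha ih =>
      obtain ⟨k, f, g, hk⟩ := ih
      obtain ⟨k', f', g', hk'⟩ := hx a
      obtain ⟨l, u, v, -⟩ := IsFilteredOrEmpty.cocone_objs k k'
      obtain ⟨m, w, hw⟩ := IsFilteredOrEmpty.cocone_maps (f ≫ u) (f' ≫ v)
      obtain ⟨n, z, hz⟩ := IsFilteredOrEmpty.cocone_maps (g ≫ u ≫ w) (g' ≫ v ≫ w)
      refine ⟨n, f ≫ u ≫ w ≫ z, g ≫ u ≫ w ≫ z, ?_⟩
      intro b hb
      rcases Finset.mem_insert.mp hb with rfl | hb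
      · have e1 : (f ≫ u ≫ w ≫ z : i ⟶ n) = f' ≫ v ≫ w ≫ z := by
          simp only [← Category.assoc]; rw [hw]
        have e2 : (g ≫ u ≫ w ≫ z : j ⟶ n) = g' ≫ v ≫ w ≫ z := by
          simp only [← Category.assoc] at hz ⊢; rw [hz]
        rw [e1, e2]
        simp only [FunctorToTypes.map_comp_apply]
        rw [hk']
      · simp only [FunctorToTypes.map_comp_apply]
        rw [hk b hb]

lemma preservesPower (X : Type) [Finite X] (J : Type) [SmallCategory J] [IsFiltered J] :
    PreservesColimitsOfShape J (coyoneda.obj (Opposite.op X) : Type ⥤ Type) := by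
  constructor
  intro K
  apply preservesColimit_of_preserves_colimit_cocone (colimit.isColimit K)
  apply Types.FilteredColimit.isColimitOf
  · intro x
    change X ⟶ colimit K at x
    classical
    cases nonempty_fintype X
    have hj : ∀ a : X, ∃ (j : J) (y : K.obj j), colimit.ι K j y = x a := fun a =>
      Types.jointly_surjective' (x a)
    choose jj y hy using hj
    obtain ⟨S, hS⟩ := IsFiltered.sup_objs_exists (Finset.univ.image jj)
    have toS : ∀ a : X, jj a ⟶ S := fun a =>
      (hS (Finset.mem_image_of_mem jj (Finset.mem_univ a))).some
    refine ⟨S, TypeCat.ofHom fun a => K.map (toS a) (y a), ?_⟩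
    apply ConcreteCategory.hom_ext
    intro a
    show x a = colimit.ι K S (K.map (toS a) (y a))
    rw [← hy a]
    exact (ConcreteCategory.congr_hom (colimit.w K (toS a)) (y a)).symm
  · intro i j xi xj hij
    change X ⟶ K.obj i at xi
    change X ⟶ K.obj j at xj
    have hx : ∀ a : X, ∃ (k : J) (f : i ⟶ k) (g : j ⟶ k),
        K.map f (xi a) = K.map g (xj a) := by
      intro a
      have : colimit.ι K i (xi a) = colimit.ι K j (xj a) :=
        ConcreteCategory.congr_hom (show xi ≫ colimit.ι K i = xj ≫ colimit.ι K j from hij) a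
      exact (Types.FilteredColimit.colimit_eq_iff K).mp this
    obtain ⟨k, f, g, hk⟩ := merge_maps K (fun a => xi a) (fun a => xj a) hx
    exact ⟨k, f, g, (ConcreteCategory.hom_ext (xi ≫ K.map f) (xj ≫ K.map g) hk : _)⟩

lemma isFP_of_iso_free (T : Monad (Type)) [PreservesFilteredColimits (T : Type ⥤ Type)]
    {A : T.Algebra} {X : Type} (hX : Finite X) (θ : A ≅ T.free.obj X) : IsFP T A := by
  intro J _SC _Filt
  have i1 : PreservesColimitsOfShape J (Monad.forget T) := by
    constructor
    intro K
    exact preservesColimit_of_createsColimit_and_hasColimit K _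
  haveI : Finite X := hX
  haveI i2 : PreservesColimitsOfShape J (coyoneda.obj (Opposite.op X) : Type ⥤ Type) :=
    preservesPower X J
  haveI i3 : PreservesColimitsOfShape J
      (Monad.forget T ⋙ (coyoneda.obj (Opposite.op X) : Type ⥤ Type)) :=
    comp_preservesColimitsOfShape _ _
  let e1 : coyoneda.obj (Opposite.op (T.free.obj X)) ≅
      Monad.forget T ⋙ (coyoneda.obj (Opposite.op X) : Type ⥤ Type) :=
    NatIso.ofComponents (fun B => Equiv.toIso
      { toFun := fun f => T.η.app X ≫ f.f
        invFun := fun (g : X ⟶ B.A) => freeExt (fun x => g x)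
        left_inv := fun f => free_hom_ext (fun x => freeExt_η _ x)
        right_inv := fun g => ConcreteCategory.hom_ext _ _ fun x => freeExt_η _ x }) (fun {B B'} u => rfl)
  haveI i4 : PreservesColimitsOfShape J (coyoneda.obj (Opposite.op (T.free.obj X))) :=
    preservesColimitsOfShape_of_natIso e1.symm
  let e2 : coyoneda.obj (Opposite.op (T.free.obj X)) ≅ coyoneda.obj (Opposite.op A) :=
    coyoneda.mapIso θ.op
  exact ⟨preservesColimitsOfShape_of_natIso e2⟩


/-! ### Surjectivity under `T` -/

lemma tmap_surjective {T : Monad (Type)} {X Y : Type} (g : X → Y)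
    (hg : Function.Surjective g) : Function.Surjective ((T : Type ⥤ Type).map (TypeCat.ofHom g)) := by
  intro u
  refine ⟨(T : Type ⥤ Type).map (TypeCat.ofHom (Function.surjInv hg)) u, ?_⟩
  rw [← FunctorToTypes.map_comp_apply]
  have : (TypeCat.ofHom (Function.surjInv hg : Y → X) ≫ TypeCat.ofHom g) = 𝟙 Y :=
    ConcreteCategory.hom_ext _ _ (Function.surjInv_eq hg)
  rw [this, FunctorToTypes.map_id_apply]

section Coalg

variable {T : Monad (Type)} {F : T.Algebra ⥤ T.Algebra}

/-- Every coalgebra with fp carrier admits a surjective cover by a coalgebra with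
free finitely generated carrier. -/
lemma exists_ffg_cover [PreservesFilteredColimits (T : Type ⥤ Type)]
    (hsurj : ∀ {A B : T.Algebra} (f : A ⟶ B), Function.Surjective f.f →
      Function.Surjective (F.map f).f)
    (C : Endofunctor.Coalgebra F) (hC : IsFP T C.V) :
    ∃ (X : Type) (hX : Finite X) (str : T.free.obj X ⟶ F.obj (T.free.obj X))
      (e : (ffgObj T F X hX str).obj ⟶ C), Function.Surjective e.f.f := by
  obtain ⟨X, hX, e₀, he₀⟩ := exists_free_cover T C.V hC
  have hFs := hsurj e₀ he₀
  have hz : ∀ x : X, ∃ z : (F.obj (T.free.obj X)).A,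
      (F.map e₀).f z = C.str.f (e₀.f (T.η.app X x)) := fun x => hFs _
  choose z hzs using hz
  refine ⟨X, hX, freeExt z, ⟨e₀, ?_⟩, he₀⟩
  apply free_hom_ext
  intro x
  show (F.map e₀).f ((freeExt z).f (T.η.app X x)) = C.str.f (e₀.f (T.η.app X x))
  rw [freeExt_η]
  exact hzs x

lemma behav_map (νF : Endofunctor.Coalgebra F) (hν : IsTerminal νF)
    {V W : Endofunctor.Coalgebra F} (g : V ⟶ W) (a : V.V.A) :
    (hν.from V).f.f a = (hν.from W).f.f (g.f.f a) := by
  have h : hν.from V = g ≫ hν.from W := hν.hom_ext _ _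
  rw [h]
  rfl

/-- One-generator extension morphism. -/
def wHom (T : Monad (Type)) (X : Type) (t : (T.free.obj X).A) :
    T.free.obj (Sum X PUnit) ⟶ T.free.obj X :=
  freeExt (Sum.elim (T.η.app X) (fun _ => t))

lemma inl_wHom (X : Type) (t : (T.free.obj X).A) :
    T.free.map (TypeCat.ofHom (Sum.inl : X → Sum X PUnit)) ≫ wHom T X t = 𝟙 (T.free.obj X) := by
  apply free_hom_ext
  intro x
  show (wHom T X t).f ((T : Type ⥤ Type).map (TypeCat.ofHom Sum.inl) (T.η.app X x)) = T.η.app X x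
  have h1 := ConcreteCategory.congr_hom (T.η.naturality (TypeCat.ofHom (Sum.inl : X → Sum X PUnit))) x
  simp only [Functor.id_obj, Functor.id_map, types_comp_apply] at h1
  rw [← h1]
  show (wHom T X t).f (T.η.app _ (Sum.inl x)) = T.η.app X x
  rw [wHom, freeExt_η]
  rfl

/-- Structure on the one-generator extension, making `wHom` a coalgebra morphism. -/
def genStr (X : Type) (str : T.free.obj X ⟶ F.obj (T.free.obj X)) (t : (T.free.obj X).A) :
    T.free.obj (Sum X PUnit) ⟶ F.obj (T.free.obj (Sum X PUnit)) :=
  wHom T X t ≫ str ≫ F.map (T.free.map (TypeCat.ofHom Sum.inl))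

lemma genStr_coalg (X : Type) (str : T.free.obj X ⟶ F.obj (T.free.obj X))
    (t : (T.free.obj X).A) :
    genStr X str t ≫ F.map (wHom T X t) = wHom T X t ≫ str := by
  rw [genStr, Category.assoc, Category.assoc, ← F.map_comp, inl_wHom, F.map_id,
    Category.comp_id]

end Coalg

section Zig

variable {T : Monad (Type)} {F : T.Algebra ⥤ T.Algebra}

lemma zigzag_of_behav (νF : Endofunctor.Coalgebra F) (hν : IsTerminal νF)
    (hproper : Proper T F νF hν)
    (c d : ObjectProperty.FullSubcategory (Pffg T F)) (a : c.obj.V.A) (b : d.obj.V.A)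
    (hab : (hν.from c.obj).f.f a = (hν.from d.obj).f.f b) :
    ZigzagRel T F ⟨c, a⟩ ⟨d, b⟩ := by
  obtain ⟨X, hX, ⟨θ⟩⟩ := c.property
  obtain ⟨Y, hY, ⟨ρ⟩⟩ := d.property
  haveI : Finite X := hX
  haveI : Finite Y := hY
  let cstr : T.free.obj X ⟶ F.obj (T.free.obj X) := θ.inv ≫ c.obj.str ≫ F.map θ.hom
  let dstr : T.free.obj Y ⟶ F.obj (T.free.obj Y) := ρ.inv ≫ d.obj.str ≫ F.map ρ.hom
  let litc : ObjectProperty.FullSubcategory (Pffg T F) := ffgObj T F X hX cstr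
  let litd : ObjectProperty.FullSubcategory (Pffg T F) := ffgObj T F Y hY dstr
  let m1 : c ⟶ litc := ObjectProperty.homMk
    { f := θ.hom
      h := by
        show c.obj.str ≫ F.map θ.hom = θ.hom ≫ cstr
        rw [show cstr = θ.inv ≫ c.obj.str ≫ F.map θ.hom from rfl, Iso.hom_inv_id_assoc] }
  let m2 : d ⟶ litd := ObjectProperty.homMk
    { f := ρ.hom
      h := by
        show d.obj.str ≫ F.map ρ.hom = ρ.hom ≫ dstr
        rw [show dstr = ρ.inv ≫ d.obj.str ≫ F.map ρ.hom from rfl, Iso.hom_inv_id_assoc] }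
  let t : (T.free.obj X).A := θ.hom.f a
  let u : (T.free.obj Y).A := ρ.hom.f b
  haveI hXP : Finite (Sum X PUnit) := inferInstance
  haveI hYP : Finite (Sum Y PUnit) := inferInstance
  let genc : ObjectProperty.FullSubcategory (Pffg T F) := ffgObj T F (Sum X PUnit) hXP (genStr X cstr t)
  let gend : ObjectProperty.FullSubcategory (Pffg T F) := ffgObj T F (Sum Y PUnit) hYP (genStr Y dstr u)
  let gw : genc ⟶ litc := ObjectProperty.homMk
    { f := wHom T X t
      h := genStr_coalg X cstr t }
  let gv : gend ⟶ litd := ObjectProperty.homMk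
    { f := wHom T Y u
      h := genStr_coalg Y dstr u }
  have hgw : (wHom T X t).f (T.η.app (Sum X PUnit) (Sum.inr PUnit.unit)) = t := by
    rw [wHom, freeExt_η]
    rfl
  have hgv : (wHom T Y u).f (T.η.app (Sum Y PUnit) (Sum.inr PUnit.unit)) = u := by
    rw [wHom, freeExt_η]
    rfl
  -- behaviours
  have bc1 : (hν.from c.obj).f.f a = (hν.from litc.obj).f.f t :=
    behav_map νF hν m1.hom a
  have bd1 : (hν.from d.obj).f.f b = (hν.from litd.obj).f.f u :=
    behav_map νF hν m2.hom b
  have bc2 : (hν.from genc.obj).f.f (T.η.app (Sum X PUnit) (Sum.inr PUnit.unit)) =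
      (hν.from litc.obj).f.f t := by
    exact (behav_map νF hν gw.hom
      (T.η.app (Sum X PUnit) (Sum.inr PUnit.unit))).trans (congrArg _ hgw)
  have bd2 : (hν.from gend.obj).f.f (T.η.app (Sum Y PUnit) (Sum.inr PUnit.unit)) =
      (hν.from litd.obj).f.f u := by
    exact (behav_map νF hν gv.hom
      (T.η.app (Sum Y PUnit) (Sum.inr PUnit.unit))).trans (congrArg _ hgv)
  have hpre : (hν.from genc.obj).f.f (T.η.app (Sum X PUnit) (Sum.inr PUnit.unit)) =
      (hν.from gend.obj).f.f (T.η.app (Sum Y PUnit) (Sum.inr PUnit.unit)) := by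
    rw [bc2, bd2, ← bc1, ← bd1, hab]
  have hmid := hproper (Sum X PUnit) (Sum Y PUnit) hXP hYP (genStr X cstr t)
    (genStr Y dstr u) (Sum.inr PUnit.unit) (Sum.inr PUnit.unit) hpre
  -- assemble the zig-zag
  have z1 : ZigzagRel T F ⟨c, a⟩ ⟨litc, t⟩ :=
    Relation.EqvGen.rel _ _ ⟨m1, rfl⟩
  have z1d : ZigzagRel T F ⟨d, b⟩ ⟨litd, u⟩ :=
    Relation.EqvGen.rel _ _ ⟨m2, rfl⟩
  have z2 : ZigzagRel T F ⟨genc, T.η.app (Sum X PUnit) (Sum.inr PUnit.unit)⟩ ⟨litc, t⟩ :=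
    Relation.EqvGen.rel _ _ ⟨gw, hgw⟩
  have z2d : ZigzagRel T F ⟨gend, T.η.app (Sum Y PUnit) (Sum.inr PUnit.unit)⟩ ⟨litd, u⟩ :=
    Relation.EqvGen.rel _ _ ⟨gv, hgv⟩
  exact z1.trans _ _ _ ((z2.symm _ _).trans _ _ _
    (hmid.trans _ _ _ (z2d.trans _ _ _ (z1d.symm _ _))))

lemma cocone_eval_eq (s : Cocone (ObjectProperty.ι (Pffg T F)))
    {p q : Σ C : ObjectProperty.FullSubcategory (Pffg T F), C.obj.V.A} (h : ZigzagRel T F p q) :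
    (s.ι.app p.1).f.f p.2 = (s.ι.app q.1).f.f q.2 := by
  induction h with
  | rel p q hpq =>
      obtain ⟨m, hm⟩ := hpq
      have hw := ConcreteCategory.congr_hom (congrArg (fun (u : _ ⟶ s.pt) => u.f.f) (s.w m)) p.2
      rw [← hm]
      exact hw.symm
  | refl p => rfl
  | symm p q _ ih => exact ih.symm
  | trans p q r _ _ ih1 ih2 => exact ih1.trans ih2

end Zig

end ProperAux

/-- If `F` is proper then the canonical (strongly epimorphic) coalgebra morphism
`h : φF ⟶ ρF` is an isomorphism; i.e. `φF` is the rational fixed point of `F`. -/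
theorem proper_implies_phiF_iso_rhoF
    (T : Monad (Type)) [PreservesFilteredColimits (T : Type ⥤ Type)]
    (F : T.Algebra ⥤ T.Algebra) [PreservesFilteredColimits F]
    (hsurj : ∀ {A B : T.Algebra} (f : A ⟶ B), Function.Surjective f.f →
      Function.Surjective (F.map f).f)
    (hsift : ∀ (J : Type) (_ : SmallCategory J) (_ : IsSifted J),
      Nonempty (PreservesColimitsOfShape J F))
    [HasColimit (ObjectProperty.ι (Pffg T F))]
    [HasColimit (ObjectProperty.ι (Pfp T F))]
    (νF : Endofunctor.Coalgebra F) (hν : IsTerminal νF)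
    (hproper : Proper T F νF hν)
    (h : colimit (ObjectProperty.ι (Pffg T F)) ⟶
        colimit (ObjectProperty.ι (Pfp T F)))
    (hh : ∀ (c : ObjectProperty.FullSubcategory (Pffg T F)) (hc : Pfp T F c.obj),
      colimit.ι (ObjectProperty.ι (Pffg T F)) c ≫ h =
        colimit.ι (ObjectProperty.ι (Pfp T F)) ⟨c.obj, hc⟩) :
    IsIso h := by
  classical
  open ProperAux in
  let IA := ObjectProperty.ι (Pffg T F)
  let IB := ObjectProperty.ι (Pfp T F)
  -- every ffg coalgebra has fp carrier
  have ffg_fp : ∀ c : ObjectProperty.FullSubcategory (Pffg T F), Pfp T F c.obj := by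
    intro c
    obtain ⟨X, hX, ⟨θ⟩⟩ := c.property
    exact ProperAux.isFP_of_iso_free T hX θ
  -- choose ffg covers of fp coalgebras
  have hcov : ∀ C : ObjectProperty.FullSubcategory (Pfp T F),
      ∃ (X : Type) (hX : Finite X) (str : T.free.obj X ⟶ F.obj (T.free.obj X))
        (e : (ffgObj T F X hX str).obj ⟶ C.obj), Function.Surjective e.f.f :=
    fun C => ProperAux.exists_ffg_cover hsurj C.obj C.property
  choose Xc hXc strc ec hec using hcov
  let cov : ObjectProperty.FullSubcategory (Pfp T F) → ObjectProperty.FullSubcategory (Pffg T F) :=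
    fun C => ffgObj T F (Xc C) (hXc C) (strc C)
  -- equal behaviour gives equal colimit injections
  have key : ∀ (c d : ObjectProperty.FullSubcategory (Pffg T F)) (a : c.obj.V.A) (b : d.obj.V.A),
      (hν.from c.obj).f.f a = (hν.from d.obj).f.f b →
      (colimit.ι IA c).f.f a = (colimit.ι IA d).f.f b := fun c d a b hab =>
    ProperAux.cocone_eval_eq (colimit.cocone IA)
      (ProperAux.zigzag_of_behav νF hν hproper c d a b hab)
  -- the inverse function on each fp coalgebra
  let tf : ∀ C : ObjectProperty.FullSubcategory (Pfp T F), C.obj.V.A → (colimit IA).V.A := fun C a =>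
    (colimit.ι IA (cov C)).f.f (Function.surjInv (hec C) a)
  have G : ∀ (C : ObjectProperty.FullSubcategory (Pfp T F)) (W : ObjectProperty.FullSubcategory (Pffg T F))
      (g : W.obj ⟶ C.obj) (w : W.obj.V.A),
      tf C (g.f.f w) = (colimit.ι IA W).f.f w := by
    intro C W g w
    apply key
    have h1 : (ec C).f.f (Function.surjInv (hec C) (g.f.f w)) = g.f.f w :=
      Function.surjInv_eq (hec C) _
    calc (hν.from (cov C).obj).f.f (Function.surjInv (hec C) (g.f.f w))
        = (hν.from C.obj).f.f ((ec C).f.f (Function.surjInv (hec C) (g.f.f w))) :=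
          ProperAux.behav_map νF hν (ec C) _
      _ = (hν.from C.obj).f.f (g.f.f w) := by rw [h1]
      _ = (hν.from W.obj).f.f w := (ProperAux.behav_map νF hν g w).symm
  have tfe : ∀ (C : ObjectProperty.FullSubcategory (Pfp T F)) (x : (cov C).obj.V.A),
      tf C ((ec C).f.f x) = (colimit.ι IA (cov C)).f.f x :=
    fun C x => G C (cov C) (ec C) x
  -- `tf` is an algebra morphism
  have tfalg : ∀ C : ObjectProperty.FullSubcategory (Pfp T F),
      (T : Type ⥤ Type).map (TypeCat.ofHom (tf C)) ≫ (colimit IA).V.a =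
        C.obj.V.a ≫ TypeCat.ofHom (tf C) := by
    intro C
    apply ConcreteCategory.hom_ext
    intro u
    obtain ⟨v, rfl⟩ := ProperAux.tmap_surjective (ec C).f.f (hec C) u
    show (colimit IA).V.a ((T : Type ⥤ Type).map (TypeCat.ofHom (tf C)) ((T : Type ⥤ Type).map (ec C).f.f v))
      = tf C (C.obj.V.a ((T : Type ⥤ Type).map (ec C).f.f v))
    have h1 : C.obj.V.a ((T : Type ⥤ Type).map (ec C).f.f v)
        = (ec C).f.f ((cov C).obj.V.a v) :=
      ConcreteCategory.congr_hom (ec C).f.h v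
    have h2 : (colimit IA).V.a ((T : Type ⥤ Type).map (colimit.ι IA (cov C)).f.f v)
        = (colimit.ι IA (cov C)).f.f ((cov C).obj.V.a v) :=
      ConcreteCategory.congr_hom (colimit.ι IA (cov C)).f.h v
    have hcomp : (((ec C).f.f : (cov C).obj.V.A ⟶ C.obj.V.A) ≫ TypeCat.ofHom (tf C))
        = (colimit.ι IA (cov C)).f.f := ConcreteCategory.hom_ext _ _ (tfe C)
    have hmap : (T : Type ⥤ Type).map (TypeCat.ofHom (tf C)) ((T : Type ⥤ Type).map (ec C).f.f v)
        = (T : Type ⥤ Type).map (colimit.ι IA (cov C)).f.f v := by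
      rw [← FunctorToTypes.map_comp_apply, hcomp]
    exact (congrArg _ hmap).trans (h2.trans ((tfe C _).symm.trans (congrArg (tf C) h1.symm)))
  let tAlg : ∀ C : ObjectProperty.FullSubcategory (Pfp T F), C.obj.V ⟶ (colimit IA).V := fun C =>
    { f := TypeCat.ofHom (tf C), h := tfalg C }
  -- `tAlg` is a coalgebra morphism
  have hcompA : ∀ C : ObjectProperty.FullSubcategory (Pfp T F),
      (ec C).f ≫ tAlg C = (colimit.ι IA (cov C)).f := by
    intro C
    apply Monad.Algebra.Hom.ext
    apply ConcreteCategory.hom_ext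
    intro x
    exact tfe C x
  have tfcoalg : ∀ C : ObjectProperty.FullSubcategory (Pfp T F),
      C.obj.str ≫ F.map (tAlg C) = tAlg C ≫ (colimit IA).str := by
    intro C
    apply Monad.Algebra.Hom.ext
    apply ConcreteCategory.hom_ext
    intro a
    obtain ⟨x, rfl⟩ := hec C a
    show (F.map (tAlg C)).f (C.obj.str.f ((ec C).f.f x))
      = (colimit IA).str.f (tf C ((ec C).f.f x))
    have h1 : (F.map (ec C).f).f ((cov C).obj.str.f x) = C.obj.str.f ((ec C).f.f x) :=
      ConcreteCategory.congr_hom (congrArg Monad.Algebra.Hom.f (ec C).h) x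
    have h4 : (F.map ((colimit.ι IA (cov C)).f)).f ((cov C).obj.str.f x)
        = (colimit IA).str.f ((colimit.ι IA (cov C)).f.f x) :=
      ConcreteCategory.congr_hom (congrArg Monad.Algebra.Hom.f (colimit.ι IA (cov C)).h) x
    have h3 : ∀ y, (F.map (tAlg C)).f ((F.map (ec C).f).f y)
        = (F.map ((colimit.ι IA (cov C)).f)).f y := by
      intro y
      calc (F.map (tAlg C)).f ((F.map (ec C).f).f y)
          = (F.map ((ec C).f) ≫ F.map (tAlg C)).f y := rfl
        _ = (F.map ((ec C).f ≫ tAlg C)).f y := by rw [← F.map_comp]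
        _ = (F.map ((colimit.ι IA (cov C)).f)).f y := by rw [hcompA C]
    exact (congrArg (fun z => (F.map (tAlg C)).f z) h1.symm).trans
      ((h3 _).trans (h4.trans (congrArg (fun z => (colimit IA).str.f z) (tfe C x).symm)))
  let tHom : ∀ C : ObjectProperty.FullSubcategory (Pfp T F), IB.obj C ⟶ colimit IA := fun C =>
    { f := tAlg C, h := tfcoalg C }
  -- cocone compatibility
  have tnat : ∀ {C C' : ObjectProperty.FullSubcategory (Pfp T F)} (f : C ⟶ C'),
      IB.map f ≫ tHom C' = tHom C := by
    intro C C' f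
    apply Endofunctor.Coalgebra.ext
    apply Monad.Algebra.Hom.ext
    apply ConcreteCategory.hom_ext
    intro a
    obtain ⟨x, rfl⟩ := hec C a
    show tf C' (f.hom.f.f ((ec C).f.f x)) = tf C ((ec C).f.f x)
    have h1 : tf C' (((ec C ≫ (f.hom : C.obj ⟶ C'.obj)) : (cov C).obj ⟶ C'.obj).f.f x)
        = (colimit.ι IA (cov C)).f.f x := G C' (cov C) (ec C ≫ (f.hom : C.obj ⟶ C'.obj)) x
    exact h1.trans (tfe C x).symm
  let tc : Cocone IB :=
    { pt := colimit IA
      ι :=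
        { app := tHom
          naturality := fun C C' f => by
            simpa using tnat f } }
  let k : colimit IB ⟶ colimit IA := colimit.desc IB tc
  refine ⟨k, ?_, ?_⟩
  · -- h ≫ k = 𝟙
    apply colimit.hom_ext
    intro c
    rw [Category.comp_id, ← Category.assoc, hh c (ffg_fp c)]
    show colimit.ι IB ⟨c.obj, ffg_fp c⟩ ≫ k = colimit.ι IA c
    rw [colimit.ι_desc]
    show tHom ⟨c.obj, ffg_fp c⟩ = colimit.ι IA c
    apply Endofunctor.Coalgebra.ext
    apply Monad.Algebra.Hom.ext
    apply ConcreteCategory.hom_ext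
    intro a
    obtain ⟨x, rfl⟩ := hec ⟨c.obj, ffg_fp c⟩ a
    show tf ⟨c.obj, ffg_fp c⟩ ((ec ⟨c.obj, ffg_fp c⟩).f.f x)
      = (colimit.ι IA c).f.f ((ec ⟨c.obj, ffg_fp c⟩).f.f x)
    have hw := ConcreteCategory.congr_hom (congrArg (fun (u : _ ⟶ colimit IA) => u.f.f)
      (colimit.w IA (ObjectProperty.homMk (ec ⟨c.obj, ffg_fp c⟩) : cov ⟨c.obj, ffg_fp c⟩ ⟶ c))) x
    exact (tfe ⟨c.obj, ffg_fp c⟩ x).trans hw.symm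
  · -- k ≫ h = 𝟙
    apply colimit.hom_ext
    intro C
    rw [Category.comp_id, ← Category.assoc, colimit.ι_desc]
    show tHom C ≫ h = colimit.ι IB C
    apply Endofunctor.Coalgebra.ext
    apply Monad.Algebra.Hom.ext
    apply ConcreteCategory.hom_ext
    intro a
    obtain ⟨x, rfl⟩ := hec C a
    show h.f.f (tf C ((ec C).f.f x)) = (colimit.ι IB C).f.f ((ec C).f.f x)
    have h1 := ConcreteCategory.congr_hom (congrArg (fun (u : _ ⟶ colimit IB) => u.f.f)
      (hh (cov C) (ffg_fp (cov C)))) x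
    have h2 := ConcreteCategory.congr_hom (congrArg (fun (u : _ ⟶ colimit IB) => u.f.f)
      (colimit.w IB (ObjectProperty.homMk (ec C) :
        (⟨(cov C).obj, ffg_fp (cov C)⟩ : ObjectProperty.FullSubcategory (Pfp T F)) ⟶ C))) x
    exact (congrArg (fun z => h.f.f z) (tfe C x)).trans (h1.trans h2.symm)
end

section
/- Let T be a finitary monad on Set and F : Set^T ⥤ Set^T a proper, finitary endofunctor preserving surjective morphisms and sifted colimits. Suppose (R, r) is an F-coalgebra that is a filtered colimit of coalgebras with finitely presentable carrier and such that for every coalgebra c : TX → F(TX) with X finite there is a unique coalgebra morphism TX → R. Then for every F-coalgebra (A, a) with finitely presentable carrier there is a unique coalgebra morphism A → R; i.e., R is the final locally finitely presentable coalgebra. -/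
open CategoryTheory CategoryTheory.Limits

namespace PFAux


variable {T : Monad (Type)}

/-- The algebra morphism from a free algebra induced by a function on generators. -/
def toAlg (A : T.Algebra) {X : Type} (u : X → A.A) : T.free.obj X ⟶ A where
  f := TypeCat.ofHom fun t => A.a ((T : Type ⥤ Type).map (TypeCat.ofHom u) t)
  h := by
    refine ConcreteCategory.hom_ext _ _ fun t => ?_
    show A.a ((T : Type ⥤ Type).map (TypeCat.ofHom fun s => A.a ((T : Type ⥤ Type).map (TypeCat.ofHom u) s)) t)
      = A.a ((T : Type ⥤ Type).map (TypeCat.ofHom u) (T.μ.app X t))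
    have h1 : (T : Type ⥤ Type).map (TypeCat.ofHom fun s => A.a ((T : Type ⥤ Type).map (TypeCat.ofHom u) s)) t
        = (T : Type ⥤ Type).map A.a ((T : Type ⥤ Type).map ((T : Type ⥤ Type).map (TypeCat.ofHom u)) t) := by
      exact types_congr_hom (Functor.map_comp (T : Type ⥤ Type) ((T : Type ⥤ Type).map (TypeCat.ofHom u)) A.a) t
    rw [h1, ← types_comp_apply ((T : Type ⥤ Type).map A.a) A.a, ← A.assoc,
      types_comp_apply]
    exact congrArg A.a (types_congr_hom (T.μ.naturality (TypeCat.ofHom u)) t)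

theorem toAlg_apply_eta (A : T.Algebra) {X : Type} (u : X → A.A) (x : X) :
    (toAlg A u).f (T.η.app X x) = u x := by
  show A.a ((T : Type ⥤ Type).map (TypeCat.ofHom u) (T.η.app X x)) = u x
  have h1 : (T : Type ⥤ Type).map (TypeCat.ofHom u) (T.η.app X x) = T.η.app A.A (u x) :=
    (types_congr_hom (T.η.naturality (TypeCat.ofHom u)) x).symm
  rw [h1, ← types_comp_apply (T.η.app A.A) A.a, A.unit]; rfl

/-- Two algebra morphisms out of a free algebra agreeing on generators are equal. -/
theorem free_hom_ext {A : T.Algebra} {X : Type} (f g : T.free.obj X ⟶ A)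
    (h : ∀ x, f.f (T.η.app X x) = g.f (T.η.app X x)) : f = g := by
  apply Monad.Algebra.Hom.ext
  refine ConcreteCategory.hom_ext _ _ fun t => ?_
  have ht : ∀ (k : T.free.obj X ⟶ A),
      k.f t = A.a ((T : Type ⥤ Type).map (TypeCat.ofHom fun x => k.f (T.η.app X x)) t) := by
    intro k
    have h2 : t = T.μ.app X ((T : Type ⥤ Type).map (T.η.app X) t) :=
      (types_congr_hom (T.right_unit X) t).symm
    have h3 : k.f (T.μ.app X ((T : Type ⥤ Type).map (T.η.app X) t))
        = A.a ((T : Type ⥤ Type).map k.f ((T : Type ⥤ Type).map (T.η.app X) t)) :=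
      (types_congr_hom k.h ((T : Type ⥤ Type).map (T.η.app X) t)).symm
    have h4 : (T : Type ⥤ Type).map k.f ((T : Type ⥤ Type).map (T.η.app X) t)
        = (T : Type ⥤ Type).map (TypeCat.ofHom fun x => k.f (T.η.app X x)) t := by
      exact (types_congr_hom (Functor.map_comp (T : Type ⥤ Type) (T.η.app X) k.f) t).symm
    rw [← h4, ← h3, ← h2]
  rw [ht f, ht g]
  exact congrArg (fun u => A.a ((T : Type ⥤ Type).map (TypeCat.ofHom u) t)) (funext h)

/-- Free algebras are projective with respect to surjective algebra morphisms. -/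
theorem free_proj {A B : T.Algebra} {X : Type} (p : A ⟶ B) (hp : Function.Surjective p.f)
    (g : T.free.obj X ⟶ B) : ∃ l : T.free.obj X ⟶ A, l ≫ p = g := by
  choose u hu using fun x => hp (g.f (T.η.app X x))
  refine ⟨toAlg A u, free_hom_ext _ _ fun x => ?_⟩
  show p.f ((toAlg A u).f (T.η.app X x)) = g.f (T.η.app X x)
  rw [show (toAlg A u).f (T.η.app X x) = u x from toAlg_apply_eta A u x, hu]

section Sub
variable (A : T.Algebra)

/-- The set of elements generated by a finite subset. -/
def genSet (S : Finset A.A) : Set A.A :=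
  Set.range (toAlg A (Subtype.val : {x // x ∈ S} → A.A)).f

theorem map_comp_apply {X Y Z : Type} (u : X → Y) (v : Y → Z) (t : (T : Type ⥤ Type).obj X) :
    (T : Type ⥤ Type).map (TypeCat.ofHom fun x => v (u x)) t
      = (T : Type ⥤ Type).map (TypeCat.ofHom v) ((T : Type ⥤ Type).map (TypeCat.ofHom u) t) := by
  rw [← types_comp_apply ((T : Type ⥤ Type).map (TypeCat.ofHom u)) ((T : Type ⥤ Type).map (TypeCat.ofHom v)),
    ← Functor.map_comp]
  rfl

theorem genSet_closed (S : Finset A.A) (t : (T : Type ⥤ Type).obj (genSet A S)) :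
    A.a ((T : Type ⥤ Type).map (TypeCat.ofHom (Subtype.val : genSet A S → A.A)) t) ∈ genSet A S := by
  set e := toAlg A (Subtype.val : {x // x ∈ S} → A.A) with he
  have hσ : ∀ y : genSet A S, ∃ w, e.f w = y.1 := fun y => y.2
  choose σ hσ' using hσ
  have hval : (Subtype.val : genSet A S → A.A) = fun y => e.f (σ y) := by
    funext y; rw [hσ']
  rw [hval, map_comp_apply]
  have h3 : A.a ((T : Type ⥤ Type).map e.f ((T : Type ⥤ Type).map (TypeCat.ofHom σ) t))
      = e.f (T.μ.app _ ((T : Type ⥤ Type).map (TypeCat.ofHom σ) t)) :=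
    types_congr_hom e.h ((T : Type ⥤ Type).map (TypeCat.ofHom σ) t)
  exact ⟨_, h3.symm⟩

/-- The subalgebra generated by a finite subset. -/
def subAlg (S : Finset A.A) : T.Algebra where
  A := genSet A S
  a := TypeCat.ofHom fun t => ⟨A.a ((T : Type ⥤ Type).map (TypeCat.ofHom Subtype.val) t), genSet_closed A S t⟩
  unit := by
    refine ConcreteCategory.hom_ext _ _ fun x => ?_
    apply Subtype.ext
    show A.a ((T : Type ⥤ Type).map (TypeCat.ofHom Subtype.val) (T.η.app _ x)) = x.1
    have h1 : (T : Type ⥤ Type).map (TypeCat.ofHom (Subtype.val : genSet A S → A.A)) (T.η.app _ x)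
        = T.η.app A.A x.1 := (types_congr_hom (T.η.naturality _) x).symm
    rw [h1, ← types_comp_apply (T.η.app A.A) A.a, A.unit]; rfl
  assoc := by
    refine ConcreteCategory.hom_ext _ _ fun t => ?_
    apply Subtype.ext
    show A.a ((T : Type ⥤ Type).map (TypeCat.ofHom Subtype.val) (T.μ.app _ t))
      = A.a ((T : Type ⥤ Type).map (TypeCat.ofHom Subtype.val) ((T : Type ⥤ Type).map _ t))
    have h1 : (T : Type ⥤ Type).map (TypeCat.ofHom (Subtype.val : genSet A S → A.A)) (T.μ.app _ t)
        = T.μ.app A.A ((T : Type ⥤ Type).map ((T : Type ⥤ Type).map (TypeCat.ofHom Subtype.val)) t) :=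
      (types_congr_hom (T.μ.naturality _) t).symm
    rw [h1, ← types_comp_apply (T.μ.app A.A) A.a, A.assoc, types_comp_apply]
    exact congrArg A.a ((types_congr_hom (Functor.map_comp (T : Type ⥤ Type) ((T : Type ⥤ Type).map (TypeCat.ofHom Subtype.val)) A.a) t).symm.trans
      (types_congr_hom (Functor.map_comp (T : Type ⥤ Type) (TypeCat.ofHom fun t => (⟨A.a ((T : Type ⥤ Type).map (TypeCat.ofHom Subtype.val) t), genSet_closed A S t⟩ : genSet A S)) (TypeCat.ofHom Subtype.val)) t))

theorem genSet_mono {S S' : Finset A.A} (h : S ≤ S') : genSet A S ⊆ genSet A S' := by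
  rintro y ⟨w, rfl⟩
  refine ⟨(T : Type ⥤ Type).map (TypeCat.ofHom fun x : {x // x ∈ S} => (⟨x.1, h x.2⟩ : {x // x ∈ S'})) w, ?_⟩
  show A.a ((T : Type ⥤ Type).map _ _) = A.a ((T : Type ⥤ Type).map _ _)
  exact congrArg A.a (types_congr_hom (Functor.map_comp (T : Type ⥤ Type) (TypeCat.ofHom fun x : {x // x ∈ S} => (⟨x.1, h x.2⟩ : {x // x ∈ S'})) (TypeCat.ofHom (Subtype.val : {x // x ∈ S'} → A.A))) w).symm

/-- The inclusion morphism between subalgebras. -/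
def subAlgHom {S S' : Finset A.A} (h : S ≤ S') : subAlg A S ⟶ subAlg A S' where
  f := TypeCat.ofHom fun y => ⟨y.1, genSet_mono A h y.2⟩
  h := by
    refine ConcreteCategory.hom_ext _ _ fun t => ?_
    apply Subtype.ext
    show A.a ((T : Type ⥤ Type).map (TypeCat.ofHom Subtype.val) ((T : Type ⥤ Type).map _ t))
      = A.a ((T : Type ⥤ Type).map (TypeCat.ofHom Subtype.val) t)
    exact congrArg A.a (types_congr_hom (Functor.map_comp (T : Type ⥤ Type) _ (TypeCat.ofHom Subtype.val)) t).symm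

/-- The filtered diagram of subalgebras generated by finite subsets. -/
def subAlgFunctor : Finset A.A ⥤ T.Algebra where
  obj S := subAlg A S
  map h := subAlgHom A (leOfHom h)
  map_id := fun S => by apply Monad.Algebra.Hom.ext; refine ConcreteCategory.hom_ext _ _ fun y => ?_; rfl
  map_comp := fun f g => by apply Monad.Algebra.Hom.ext; refine ConcreteCategory.hom_ext _ _ fun y => ?_; rfl

/-- The colimit cocone on `A` over the diagram of subalgebras. -/
def subAlgCocone : Cocone (subAlgFunctor A) where
  pt := A
  ι :=
    { app := fun S =>
        { f := TypeCat.ofHom Subtype.val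
          h := by refine ConcreteCategory.hom_ext _ _ fun t => ?_; rfl }
      naturality := fun S S' h => by
        apply Monad.Algebra.Hom.ext; refine ConcreteCategory.hom_ext _ _ fun y => ?_; rfl }

/-- The underlying cocone of types is a colimit. -/
noncomputable def subAlgTypeIsColimit :
    IsColimit ((Monad.forget T).mapCocone (subAlgCocone A)) := by
  letI := Classical.decEq A.A
  apply Types.FilteredColimit.isColimitOf
  · intro x
    have hx : x ∈ genSet A ({x} : Finset A.A) :=
      ⟨T.η.app _ (⟨x, Finset.mem_singleton_self x⟩ : {y // y ∈ ({x} : Finset A.A)}), toAlg_apply_eta A _ _⟩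
    exact ⟨({x} : Finset A.A), ⟨x, hx⟩, rfl⟩
  · intro i j xi xj hx
    refine ⟨i ⊔ j, homOfLE le_sup_left, homOfLE le_sup_right, ?_⟩
    apply Subtype.ext
    exact hx

noncomputable def subAlgIsColimit [PreservesFilteredColimits (T : Type ⥤ Type)] :
    IsColimit (subAlgCocone A) := by
  letI := Classical.decEq A.A
  exact isColimitOfReflects (Monad.forget T) (subAlgTypeIsColimit A)

theorem exists_surj_free [PreservesFilteredColimits (T : Type ⥤ Type)]
    (hA : ∀ (J : Type) (_ : SmallCategory J) (_ : IsFiltered J),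
      Nonempty (PreservesColimitsOfShape J (coyoneda.obj (Opposite.op A)))) :
    ∃ (X : Type) (_ : Finite X) (e : T.free.obj X ⟶ A), Function.Surjective e.f := by
  letI := Classical.decEq A.A
  obtain ⟨P⟩ := hA (Finset A.A) inferInstance inferInstance
  letI := P
  have hc : IsColimit ((coyoneda.obj (Opposite.op A)).mapCocone (subAlgCocone A)) :=
    isColimitOfPreserves _ (subAlgIsColimit A)
  obtain ⟨S, f, hf⟩ := Types.jointly_surjective _ hc (𝟙 A)
  have hf' : f ≫ (subAlgCocone A).ι.app S = 𝟙 A := hf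
  refine ⟨{x // x ∈ S}, inferInstance, toAlg A Subtype.val, fun x => ?_⟩
  have hx : ((subAlgCocone A).ι.app S).f (f.f x) = x :=
    types_congr_hom (congrArg Monad.Algebra.Hom.f hf') x
  obtain ⟨w, hw⟩ := (f.f x).2
  exact ⟨w, hw.trans hx⟩

end Sub


variable {T : Monad (Type)}

/-- `T` preserves surjectivity. -/
theorem T_map_surj {X Y : Type} (u : X → Y) (hu : Function.Surjective u) :
    Function.Surjective ((T : Type ⥤ Type).map (TypeCat.ofHom u)) := by
  intro y
  refine ⟨(T : Type ⥤ Type).map (TypeCat.ofHom (Function.surjInv hu)) y, ?_⟩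
  have : TypeCat.ofHom (Function.surjInv hu) ≫ TypeCat.ofHom u = 𝟙 Y :=
    ConcreteCategory.hom_ext _ _ fun b => Function.surjInv_eq hu b
  refine (types_congr_hom (Functor.map_comp (T : Type ⥤ Type) (TypeCat.ofHom (Function.surjInv hu)) (TypeCat.ofHom u)) y).symm.trans ?_
  rw [this, CategoryTheory.Functor.map_id]; rfl

/-- Cancellation of surjective algebra morphisms. -/
theorem cancel_alg {B A C : T.Algebra} (e : B ⟶ A) (he : Function.Surjective e.f)
    {f g : A ⟶ C} (h : e ≫ f = e ≫ g) : f = g := by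
  apply Monad.Algebra.Hom.ext
  refine ConcreteCategory.hom_ext _ _ fun x => ?_
  obtain ⟨w, rfl⟩ := he x
  exact types_congr_hom (congrArg Monad.Algebra.Hom.f h) w

/-- Factorization of an algebra morphism through a surjective one. -/
theorem factor_surj {B A C : T.Algebra} (e : B ⟶ A) (he : Function.Surjective e.f)
    (h : B ⟶ C) (hcoeq : ∀ t t', e.f t = e.f t' → h.f t = h.f t') :
    ∃ k : A ⟶ C, e ≫ k = h := by
  let k₀ : A.A → C.A := fun a => h.f (Function.surjInv he a)
  have hke : ∀ t, k₀ (e.f t) = h.f t := fun t =>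
    hcoeq _ _ (Function.surjInv_eq he (e.f t))
  have hk : (T : Type ⥤ Type).map (TypeCat.ofHom k₀) ≫ C.a = A.a ≫ TypeCat.ofHom k₀ := by
    refine ConcreteCategory.hom_ext _ _ fun t => ?_
    obtain ⟨w, rfl⟩ := T_map_surj e.f he t
    show C.a ((T : Type ⥤ Type).map (TypeCat.ofHom k₀) ((T : Type ⥤ Type).map e.f w))
      = k₀ (A.a ((T : Type ⥤ Type).map e.f w))
    have h1 : (T : Type ⥤ Type).map (TypeCat.ofHom k₀) ((T : Type ⥤ Type).map e.f w)
        = (T : Type ⥤ Type).map h.f w := by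
      exact (types_congr_hom (Functor.map_comp (T : Type ⥤ Type) e.f (TypeCat.ofHom k₀)) w).symm.trans
        (congrArg (fun u => (T : Type ⥤ Type).map (TypeCat.ofHom u) w) (funext hke))
    have h2 : A.a ((T : Type ⥤ Type).map e.f w) = e.f (B.a w) := types_congr_hom e.h w
    rw [h1, h2, hke]
    exact types_congr_hom h.h w
  exact ⟨⟨TypeCat.ofHom k₀, hk⟩, Monad.Algebra.Hom.ext (ConcreteCategory.hom_ext _ _ hke)⟩

section WithF
variable {F : T.Algebra ⥤ T.Algebra}

/-- Every coalgebra with free finitely generated carrier admits a unique morphism to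
`R`, given that this holds for literal free carriers. -/
theorem ffg_unique (R : Endofunctor.Coalgebra F)
    (huniq : ∀ (X : Type) (_ : Finite X) (c : T.free.obj X ⟶ F.obj (T.free.obj X)),
      ∃! _ : (⟨T.free.obj X, c⟩ : Endofunctor.Coalgebra F) ⟶ R, True)
    (C : ObjectProperty.FullSubcategory (Pffg T F)) : ∃! _ : C.obj ⟶ R, True := by
  obtain ⟨X, hX, ⟨i⟩⟩ := C.property
  let c₀ : T.free.obj X ⟶ F.obj (T.free.obj X) := i.inv ≫ C.obj.str ≫ F.map i.hom
  obtain ⟨m, -, hm⟩ := huniq X hX c₀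
  let j : C.obj ⟶ (⟨T.free.obj X, c₀⟩ : Endofunctor.Coalgebra F) :=
    { f := i.hom
      h := by simp [c₀] }
  let j' : (⟨T.free.obj X, c₀⟩ : Endofunctor.Coalgebra F) ⟶ C.obj :=
    { f := i.inv
      h := by
        show c₀ ≫ F.map i.inv = i.inv ≫ C.obj.str
        simp [c₀, ← F.map_comp] }
  have hjj : j ≫ j' = 𝟙 C.obj := by
    apply Endofunctor.Coalgebra.Hom.ext
    simp [j, j']
  refine ⟨j ≫ m, trivial, fun y _ => ?_⟩
  have h1 : j' ≫ y = m := hm _ trivial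
  calc y = (j ≫ j') ≫ y := by rw [hjj]; simp
    _ = j ≫ m := by rw [Category.assoc, h1]

/-- Zig-zag invariance of the canonical morphisms into `R`. -/
theorem zigzag_invariant (R : Endofunctor.Coalgebra F)
    (u : ∀ C : ObjectProperty.FullSubcategory (Pffg T F), C.obj ⟶ R)
    (hu : ∀ (C : ObjectProperty.FullSubcategory (Pffg T F)) (f : C.obj ⟶ R), f = u C)
    {p q : Σ C : ObjectProperty.FullSubcategory (Pffg T F), C.obj.V.A} (h : ZigzagRel T F p q) :
    (u p.1).f.f p.2 = (u q.1).f.f q.2 := by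
  induction h with
  | rel p q hpq =>
      obtain ⟨m, hm⟩ := hpq
      have h1 : u p.1 = (show p.1.obj ⟶ q.1.obj from m.hom) ≫ u q.1 := (hu _ _).symm
      rw [h1, ← hm]
      rfl
  | refl p => rfl
  | symm _ _ _ ih => exact ih.symm
  | trans _ _ _ _ _ ih1 ih2 => exact ih1.trans ih2

end WithF

section WithF2
variable {F : T.Algebra ⥤ T.Algebra}

/-- Covering a free coalgebra so that a given element becomes a generator. -/
theorem point_cover
    (hsurj : ∀ {A B : T.Algebra} (f : A ⟶ B), Function.Surjective f.f →
      Function.Surjective (F.map f).f)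
    {X : Type} (c : T.free.obj X ⟶ F.obj (T.free.obj X))
    (t : (T.free.obj X).A) :
    ∃ (p : T.free.obj (X ⊕ PUnit) ⟶ T.free.obj X)
      (c' : T.free.obj (X ⊕ PUnit) ⟶ F.obj (T.free.obj (X ⊕ PUnit))),
      Function.Surjective p.f ∧ p.f (T.η.app _ (Sum.inr PUnit.unit)) = t ∧
      c' ≫ F.map p = p ≫ c := by
  let u : X ⊕ PUnit → (T.free.obj X).A := Sum.elim (T.η.app X) fun _ => t
  let p := toAlg (T.free.obj X) u
  have hpt : p.f (T.η.app _ (Sum.inr PUnit.unit)) = t := toAlg_apply_eta _ u _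
  have hsec : T.free.map (TypeCat.ofHom (Sum.inl : X → X ⊕ PUnit)) ≫ p = 𝟙 (T.free.obj X) := by
    apply free_hom_ext
    intro x
    show p.f ((T : Type ⥤ Type).map (TypeCat.ofHom Sum.inl) (T.η.app X x)) = T.η.app X x
    have h1 : (T : Type ⥤ Type).map (TypeCat.ofHom (Sum.inl : X → X ⊕ PUnit)) (T.η.app X x)
        = T.η.app (X ⊕ PUnit) (Sum.inl x) := (types_congr_hom (T.η.naturality _) x).symm
    rw [h1]
    exact toAlg_apply_eta _ u _
  have hp : Function.Surjective p.f := fun y =>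
    ⟨(T.free.map (TypeCat.ofHom (Sum.inl : X → X ⊕ PUnit))).f y,
      types_congr_hom (congrArg Monad.Algebra.Hom.f hsec) y⟩
  obtain ⟨c', hc'⟩ := free_proj (F.map p) (hsurj p hp) (p ≫ c)
  exact ⟨p, c', hp, hpt, hc'⟩

end WithF2

end PFAux

/-- For a proper functor `F`, a coalgebra `R` which is a filtered colimit of coalgebras
with finitely presentable carrier and which admits a unique coalgebra morphism from
every coalgebra with free finitely generated carrier, admits a unique coalgebra
morphism from every coalgebra with finitely presentable carrier; i.e. `R` is the final
locally finitely presentable coalgebra. -/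
theorem proper_finality_check_on_ffg_suffices
    (T : Monad (Type)) [PreservesFilteredColimits (T : Type ⥤ Type)]
    (F : T.Algebra ⥤ T.Algebra) [PreservesFilteredColimits F]
    (hsurj : ∀ {A B : T.Algebra} (f : A ⟶ B), Function.Surjective f.f →
      Function.Surjective (F.map f).f)
    (hsift : ∀ (J : Type) (_ : SmallCategory J) (_ : IsSifted J),
      Nonempty (PreservesColimitsOfShape J F))
    [HasColimit (ObjectProperty.ι (Pffg T F))]
    (νF : Endofunctor.Coalgebra F) (hν : IsTerminal νF)
    (hproper : Proper T F νF hν)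
    (J : Type) [SmallCategory J] [IsFiltered J]
    (DJ : J ⥤ Endofunctor.Coalgebra F) (hDJ : ∀ j : J, IsFP T (DJ.obj j).V)
    (cc : Cocone DJ) (hcc : Nonempty (IsColimit cc))
    (huniq : ∀ (X : Type) (_ : Finite X)
      (c : T.free.obj X ⟶ F.obj (T.free.obj X)),
      ∃! _ : (⟨T.free.obj X, c⟩ : Endofunctor.Coalgebra F) ⟶ cc.pt, True) :
    ∀ A : Endofunctor.Coalgebra F, IsFP T A.V → ∃! _ : A ⟶ cc.pt, True := by
  intro A hA
  classical
  -- Step 1: a surjection from a free finitely generated algebra onto the carrier of `A`.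
  obtain ⟨X, hX, e, he⟩ := PFAux.exists_surj_free A.V hA
  -- Step 2: lift the coalgebra structure of `A` along this surjection.
  obtain ⟨c, hc⟩ := PFAux.free_proj (F.map e) (hsurj e he) (e ≫ A.str)
  let ec : (⟨T.free.obj X, c⟩ : Endofunctor.Coalgebra F) ⟶ A := ⟨e, hc⟩
  -- The canonical (unique) morphisms from all ffg coalgebras to `cc.pt`.
  have hffg := fun C => PFAux.ffg_unique cc.pt huniq C
  let uu : ∀ C : ObjectProperty.FullSubcategory (Pffg T F), C.obj ⟶ cc.pt := fun C => (hffg C).choose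
  have huu : ∀ (C : ObjectProperty.FullSubcategory (Pffg T F)) (f : C.obj ⟶ cc.pt), f = uu C :=
    fun C f => (hffg C).choose_spec.2 f trivial
  -- Key step (uses properness): elements identified in `νF` are identified in `cc.pt`.
  have key : ∀ (Y : Type) (hY : Finite Y) (d : T.free.obj Y ⟶ F.obj (T.free.obj Y))
      (t t' : (T.free.obj Y).A),
      (hν.from ⟨T.free.obj Y, d⟩).f.f t = (hν.from ⟨T.free.obj Y, d⟩).f.f t' →
      (uu (ffgObj T F Y hY d)).f.f t = (uu (ffgObj T F Y hY d)).f.f t' := by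
    intro Y hY d t t' hn
    haveI : Finite Y := hY
    obtain ⟨p, d', hp, hpt, hpd⟩ := PFAux.point_cover hsurj d t
    obtain ⟨p2, d'', hp2, hpt2, hpd2⟩ := PFAux.point_cover hsurj d t'
    let pc : (⟨T.free.obj (Y ⊕ PUnit), d'⟩ : Endofunctor.Coalgebra F) ⟶
        (⟨T.free.obj Y, d⟩ : Endofunctor.Coalgebra F) := ⟨p, hpd⟩
    let pc2 : (⟨T.free.obj (Y ⊕ PUnit), d''⟩ : Endofunctor.Coalgebra F) ⟶
        (⟨T.free.obj Y, d⟩ : Endofunctor.Coalgebra F) := ⟨p2, hpd2⟩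
    have hn1 : (hν.from ⟨T.free.obj (Y ⊕ PUnit), d'⟩).f.f
        (T.η.app (Y ⊕ PUnit) (Sum.inr PUnit.unit)) = (hν.from ⟨T.free.obj Y, d⟩).f.f t := by
      have h1 : hν.from (⟨T.free.obj (Y ⊕ PUnit), d'⟩ : Endofunctor.Coalgebra F)
          = pc ≫ hν.from (⟨T.free.obj Y, d⟩ : Endofunctor.Coalgebra F) := hν.hom_ext _ _
      rw [h1, ← hpt]
      rfl
    have hn2 : (hν.from ⟨T.free.obj (Y ⊕ PUnit), d''⟩).f.f
        (T.η.app (Y ⊕ PUnit) (Sum.inr PUnit.unit)) = (hν.from ⟨T.free.obj Y, d⟩).f.f t' := by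
      have h1 : hν.from (⟨T.free.obj (Y ⊕ PUnit), d''⟩ : Endofunctor.Coalgebra F)
          = pc2 ≫ hν.from (⟨T.free.obj Y, d⟩ : Endofunctor.Coalgebra F) := hν.hom_ext _ _
      rw [h1, ← hpt2]
      rfl
    have hz := hproper (Y ⊕ PUnit) (Y ⊕ PUnit) inferInstance inferInstance d' d''
      (Sum.inr PUnit.unit) (Sum.inr PUnit.unit) (by rw [hn1, hn2, hn])
    have hzi := PFAux.zigzag_invariant cc.pt uu huu hz
    have e1 : uu (ffgObj T F (Y ⊕ PUnit) inferInstance d')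
        = (show (ffgObj T F (Y ⊕ PUnit) inferInstance d').obj ⟶ (ffgObj T F Y hY d).obj from pc)
            ≫ uu (ffgObj T F Y hY d) := (huu _ _).symm
    have e2 : uu (ffgObj T F (Y ⊕ PUnit) inferInstance d'')
        = (show (ffgObj T F (Y ⊕ PUnit) inferInstance d'').obj ⟶ (ffgObj T F Y hY d).obj from pc2)
            ≫ uu (ffgObj T F Y hY d) := (huu _ _).symm
    rw [e1, e2] at hzi
    have hl : (uu (ffgObj T F Y hY d)).f.f (p.f (T.η.app (Y ⊕ PUnit) (Sum.inr PUnit.unit)))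
        = (uu (ffgObj T F Y hY d)).f.f (p2.f (T.η.app (Y ⊕ PUnit) (Sum.inr PUnit.unit))) := hzi
    rw [hpt, hpt2] at hl
    exact hl
  -- The chosen morphism on the free cover.
  let h : (⟨T.free.obj X, c⟩ : Endofunctor.Coalgebra F) ⟶ cc.pt := uu (ffgObj T F X hX c)
  have hcoeq : ∀ t t', e.f t = e.f t' → h.f.f t = h.f.f t' := by
    intro t t' het
    apply key X hX c t t'
    have h1 : hν.from (⟨T.free.obj X, c⟩ : Endofunctor.Coalgebra F)
        = ec ≫ hν.from A := hν.hom_ext _ _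
    rw [h1]
    show (hν.from A).f.f (e.f t) = (hν.from A).f.f (e.f t')
    rw [het]
  obtain ⟨k, hk⟩ := PFAux.factor_surj e he h.f hcoeq
  have hh : c ≫ F.map h.f = h.f ≫ cc.pt.str := h.h
  have hkc : A.str ≫ F.map k = k ≫ cc.pt.str := by
    apply PFAux.cancel_alg e he
    rw [← Category.assoc, ← hc, Category.assoc, ← F.map_comp, hk, hh, ← hk]
    rw [Category.assoc]
  let K : A ⟶ cc.pt := ⟨k, hkc⟩
  refine ⟨K, trivial, fun y _ => ?_⟩
  obtain ⟨m, -, hm⟩ := huniq X hX c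
  have h1 : ec ≫ y = m := hm _ trivial
  have h2 : ec ≫ K = m := hm _ trivial
  have h3 : e ≫ y.f = e ≫ K.f := congrArg Endofunctor.Coalgebra.Hom.f (h1.trans h2.symm)
  apply Endofunctor.Coalgebra.Hom.ext
  exact PFAux.cancel_alg e he h3
end

section
/- Let T be a finitary monad on Set such that finitely generated T-algebras are closed under kernel pairs, and let F : Set^T ⥤ Set^T be a finitary endofunctor preserving surjective T-algebra morphisms that maps kernel pairs of T-algebra morphisms to weak pullbacks in Set. Then F is proper: whenever c : TX → F(TX), d : TY → F(TY) with X, Y finite and x ∈ X, y ∈ Y satisfy that η_X(x) and η_Y(y) have equal images in the final coalgebra, there is a zig-zag of coalgebra morphisms between coalgebras with free finitely generated carriers relating η_X(x) and η_Y(y). -/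
open CategoryTheory CategoryTheory.Limits

namespace ProperAux

variable {T : Monad (Type)}

/-- Extend a map on generators to an algebra morphism from the free algebra. -/
def extHom {Z : Type} {B : T.Algebra} (g : Z → B.A) : T.free.obj Z ⟶ B where
  f := T.map (TypeCat.ofHom g) ≫ B.a
  h := by
    show T.map (T.map (TypeCat.ofHom g) ≫ B.a) ≫ B.a = T.μ.app Z ≫ T.map (TypeCat.ofHom g) ≫ B.a
    rw [Functor.map_comp, Category.assoc, ← B.assoc]
    show T.map (T.map (TypeCat.ofHom g)) ≫ T.μ.app B.A ≫ B.a = T.μ.app Z ≫ T.map (TypeCat.ofHom g) ≫ B.a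
    rw [← Category.assoc,
      show T.map (T.map (TypeCat.ofHom g)) ≫ T.μ.app B.A = T.μ.app Z ≫ T.map (TypeCat.ofHom g) from T.μ.naturality (TypeCat.ofHom g),
      Category.assoc]

lemma extHom_eta {Z : Type} {B : T.Algebra} (g : Z → B.A) (z : Z) :
    (extHom g).f (T.η.app Z z) = g z := by
  have h1 : T.map (TypeCat.ofHom g) (T.η.app Z z) = T.η.app B.A (g z) := (ConcreteCategory.congr_hom (T.η.naturality (TypeCat.ofHom g)) z).symm
  show B.a (T.map (TypeCat.ofHom g) (T.η.app Z z)) = g z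
  rw [h1]
  exact ConcreteCategory.congr_hom B.unit (g z)

lemma free_hom_ext_s19 {Z : Type} {B : T.Algebra} {f₁ f₂ : T.free.obj Z ⟶ B}
    (hgen : ∀ z, f₁.f (T.η.app Z z) = f₂.f (T.η.app Z z)) : f₁ = f₂ := by
  apply (T.adj.homEquiv Z B).injective
  apply ConcreteCategory.hom_ext
  exact hgen

section Img
variable {A N : T.Algebra} (h : A ⟶ N)

lemma pt_h (t : T.obj A.A) : N.a (T.map h.f t) = h.f (A.a t) := ConcreteCategory.congr_hom h.h t

/-- the surjection onto the range -/
def eFun : A.A → Set.range h.f := fun a => ⟨h.f a, a, rfl⟩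

lemma eFun_surj : Function.Surjective (eFun h) := by
  rintro ⟨v, a, rfl⟩; exact ⟨a, rfl⟩

lemma mem_range_str (t : T.obj (Set.range h.f)) :
    N.a (T.map (TypeCat.ofHom (Subtype.val : Set.range h.f → N.A)) t) ∈ Set.range h.f := by
  obtain ⟨t', rfl⟩ : ∃ t', T.map (TypeCat.ofHom (eFun h)) t' = t := by
    obtain ⟨s, hs⟩ : ∃ s, eFun h ∘ s = id :=
      ⟨Function.surjInv (eFun_surj h), funext (Function.surjInv_eq (eFun_surj h))⟩
    refine ⟨T.map (TypeCat.ofHom s) t, ?_⟩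
    have hc : T.map (TypeCat.ofHom s) ≫ T.map (TypeCat.ofHom (eFun h)) = 𝟙 _ := by
      rw [← Functor.map_comp]
      show T.map (TypeCat.ofHom (eFun h ∘ s)) = _
      rw [hs]
      exact (T : Type ⥤ Type).map_id _
    exact ConcreteCategory.congr_hom hc t
  have hv : T.map (TypeCat.ofHom (Subtype.val : Set.range h.f → N.A)) (T.map (TypeCat.ofHom (eFun h)) t') = T.map h.f t' := by
    have hcomp : (TypeCat.ofHom (eFun h) ≫ TypeCat.ofHom (Subtype.val : Set.range h.f → N.A) : A.A ⟶ N.A) = h.f := rfl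
    rw [← types_comp_apply (T.map (TypeCat.ofHom (eFun h))) (T.map (TypeCat.ofHom Subtype.val)), ← Functor.map_comp, hcomp]
  rw [hv, pt_h]
  exact ⟨A.a t', rfl⟩

/-- structure map of the image algebra -/
def imgStr : T.obj (Set.range h.f) → Set.range h.f :=
  fun t => ⟨N.a (T.map (TypeCat.ofHom (Subtype.val : Set.range h.f → N.A)) t), mem_range_str h t⟩

/-- The image of an algebra morphism, as an algebra. -/
def imgAlg : T.Algebra where
  A := Set.range h.f
  a := TypeCat.ofHom (imgStr h)
  unit := by
    apply ConcreteCategory.hom_ext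
    intro b
    apply Subtype.ext
    show N.a (T.map (TypeCat.ofHom Subtype.val) (T.η.app _ b)) = b.val
    have h1 : T.map (TypeCat.ofHom (Subtype.val : Set.range h.f → N.A)) (T.η.app _ b) = T.η.app N.A b.val :=
      (ConcreteCategory.congr_hom (T.η.naturality (TypeCat.ofHom (Subtype.val : Set.range h.f → N.A))) b).symm
    rw [h1]
    exact ConcreteCategory.congr_hom N.unit b.val
  assoc := by
    apply ConcreteCategory.hom_ext
    intro t
    apply Subtype.ext
    have h1 : T.map (TypeCat.ofHom (Subtype.val : Set.range h.f → N.A)) (T.μ.app _ t)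
        = T.μ.app N.A (T.map (T.map (TypeCat.ofHom (Subtype.val : Set.range h.f → N.A))) t) :=
      (ConcreteCategory.congr_hom (T.μ.naturality (TypeCat.ofHom (Subtype.val : Set.range h.f → N.A))) t).symm
    have h2 := ConcreteCategory.congr_hom N.assoc (T.map (T.map (TypeCat.ofHom (Subtype.val : Set.range h.f → N.A))) t)
    have hr : (T.map (TypeCat.ofHom (imgStr h)) ≫ T.map (TypeCat.ofHom (Subtype.val : Set.range h.f → N.A))
        : T.obj (T.obj (Set.range h.f)) ⟶ T.obj N.A)
        = T.map (T.map (TypeCat.ofHom (Subtype.val : Set.range h.f → N.A))) ≫ T.map N.a := by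
      rw [← Functor.map_comp, ← Functor.map_comp]
      rfl
    show N.a (T.map (TypeCat.ofHom Subtype.val) (T.μ.app _ t)) = N.a (T.map (TypeCat.ofHom Subtype.val) (T.map (TypeCat.ofHom (imgStr h)) t))
    rw [h1]
    have h3 : T.map (TypeCat.ofHom (Subtype.val : Set.range h.f → N.A)) (T.map (TypeCat.ofHom (imgStr h)) t)
        = T.map N.a (T.map (T.map (TypeCat.ofHom (Subtype.val : Set.range h.f → N.A))) t) := ConcreteCategory.congr_hom hr t
    rw [h3]
    exact h2

/-- The epi part. -/
def eHom : A ⟶ imgAlg h where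
  f := TypeCat.ofHom (eFun h)
  h := by
    apply ConcreteCategory.hom_ext
    intro t
    apply Subtype.ext
    show N.a (T.map (TypeCat.ofHom (Subtype.val : Set.range h.f → N.A)) (T.map (TypeCat.ofHom (eFun h)) t)) = h.f (A.a t)
    rw [← types_comp_apply (T.map (TypeCat.ofHom (eFun h))) (T.map (TypeCat.ofHom Subtype.val)), ← Functor.map_comp]
    have hcomp : (TypeCat.ofHom (eFun h) ≫ TypeCat.ofHom (Subtype.val : Set.range h.f → N.A) : A.A ⟶ N.A) = h.f := rfl
    rw [hcomp, pt_h]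

end Img
end ProperAux
/-- A `T`-algebra is finitely generated: a surjective quotient of a free algebra on a
finite set. -/
def IsFG (T : Monad (Type)) (A : T.Algebra) : Prop :=
  ∃ X : Type, Finite X ∧ ∃ q : T.free.obj X ⟶ A, Function.Surjective q.f

/-- If finitely generated `T`-algebras are closed under kernel pairs and `F` maps
kernel pairs of `T`-algebra morphisms to weak pullbacks in `Set`, then `F` is proper:
behaviourally equivalent generators of coalgebras with free finitely generated carrier
are related by a zig-zag of coalgebra morphisms between such coalgebras. -/
theorem proper_of_kernelPairs_closed_and_weakPullbacks
    (T : Monad (Type)) [PreservesFilteredColimits (T : Type ⥤ Type)]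
    (F : T.Algebra ⥤ T.Algebra) [PreservesFilteredColimits F]
    (hsurj : ∀ {A B : T.Algebra} (f : A ⟶ B), Function.Surjective f.f →
      Function.Surjective (F.map f).f)
    [HasPullbacks T.Algebra]
    (hfg : ∀ {A B : T.Algebra} (f : A ⟶ B), IsFG T A → IsFG T B →
      IsFG T (pullback f f))
    (hweak : ∀ {A B : T.Algebra} (f : A ⟶ B) (a b : (F.obj A).A),
      (F.map f).f a = (F.map f).f b →
      ∃ k : (F.obj (pullback f f)).A,
        (F.map (pullback.fst f f)).f k = a ∧ (F.map (pullback.snd f f)).f k = b)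
    (νF : Endofunctor.Coalgebra F) (hν : IsTerminal νF)
    (X Y : Type) (hX : Finite X) (hY : Finite Y)
    (c : T.free.obj X ⟶ F.obj (T.free.obj X))
    (d : T.free.obj Y ⟶ F.obj (T.free.obj Y)) (x : X) (y : Y)
    (hbeh : (hν.from ⟨T.free.obj X, c⟩).f.f (T.η.app X x) =
      (hν.from ⟨T.free.obj Y, d⟩).f.f (T.η.app Y y)) :
    ZigzagRel T F ⟨ffgObj T F X hX c, T.η.app X x⟩ ⟨ffgObj T F Y hY d, T.η.app Y y⟩ := by
  classical
  haveI := hX; haveI := hY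
  open ProperAux in
  -- the coproduct coalgebra on the free algebra over `X ⊕ Y`
  set A : T.Algebra := T.free.obj (X ⊕ Y) with hAdef
  set jX : T.free.obj X ⟶ A := T.free.map (TypeCat.ofHom Sum.inl) with hjXdef
  set jY : T.free.obj Y ⟶ A := T.free.map (TypeCat.ofHom Sum.inr) with hjYdef
  set g0 : X ⊕ Y → (F.obj A).A := fun z => Sum.rec
    (fun x' => (F.map jX).f (c.f (T.η.app X x')))
    (fun y' => (F.map jY).f (d.f (T.η.app Y y'))) z with hg0def
  set c' : A ⟶ F.obj A := ProperAux.extHom g0 with hc'def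
  have heta : ∀ (x' : X), jX.f (T.η.app X x') = T.η.app (X ⊕ Y) (Sum.inl x') :=
    fun x' => (ConcreteCategory.congr_hom (T.η.naturality (TypeCat.ofHom Sum.inl)) x').symm
  have hetaY : ∀ (y' : Y), jY.f (T.η.app Y y') = T.η.app (X ⊕ Y) (Sum.inr y') :=
    fun y' => (ConcreteCategory.congr_hom (T.η.naturality (TypeCat.ofHom Sum.inr)) y').symm
  -- the injections are coalgebra morphisms
  have hjX : c ≫ F.map jX = jX ≫ c' := by
    apply ProperAux.free_hom_ext_s19
    intro x'
    show (F.map jX).f (c.f (T.η.app X x')) = c'.f (jX.f (T.η.app X x'))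
    rw [heta x', hc'def, ProperAux.extHom_eta]
  have hjY : d ≫ F.map jY = jY ≫ c' := by
    apply ProperAux.free_hom_ext_s19
    intro y'
    show (F.map jY).f (d.f (T.η.app Y y')) = c'.f (jY.f (T.η.app Y y'))
    rw [hetaY y', hc'def, ProperAux.extHom_eta]
  let CX : Endofunctor.Coalgebra F := ⟨T.free.obj X, c⟩
  let CY : Endofunctor.Coalgebra F := ⟨T.free.obj Y, d⟩
  let CA : Endofunctor.Coalgebra F := ⟨A, c'⟩
  let jXc : CX ⟶ CA := ⟨jX, hjX⟩
  let jYc : CY ⟶ CA := ⟨jY, hjY⟩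
  -- the unique morphism into the final coalgebra
  set h : A ⟶ νF.V := (hν.from CA).f with hhdef
  set a₀ : A.A := T.η.app (X ⊕ Y) (Sum.inl x) with ha₀def
  set b₀ : A.A := T.η.app (X ⊕ Y) (Sum.inr y) with hb₀def
  have hab : h.f a₀ = h.f b₀ := by
    have hXfrom : hν.from CX = jXc ≫ hν.from CA := hν.hom_ext _ _
    have hYfrom : hν.from CY = jYc ≫ hν.from CA := hν.hom_ext _ _
    have hax : (hν.from CX).f.f (T.η.app X x) = h.f a₀ := by
      rw [hXfrom]
      show h.f (jX.f (T.η.app X x)) = h.f a₀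
      rw [heta x]
    have hay : (hν.from CY).f.f (T.η.app Y y) = h.f b₀ := by
      rw [hYfrom]
      show h.f (jY.f (T.η.app Y y)) = h.f b₀
      rw [hetaY y]
    rw [← hax, ← hay]
    exact hbeh
  -- image factorization of h
  set B : T.Algebra := ProperAux.imgAlg h with hBdef
  set e : A ⟶ B := ProperAux.eHom h with hedef
  have he_eq : ∀ a b : A.A, h.f a = h.f b → e.f a = e.f b := fun a b hab' => Subtype.ext hab'
  have hval : ∀ {a b : A.A}, e.f a = e.f b → h.f a = h.f b := fun hab' => congrArg Subtype.val hab'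
  have hesurj : Function.Surjective e.f := ProperAux.eFun_surj h
  -- the kernel pair of e is finitely generated
  have fgA : IsFG T A := ⟨X ⊕ Y, inferInstance, 𝟙 A, fun a => ⟨a, rfl⟩⟩
  have fgB : IsFG T B := ⟨X ⊕ Y, inferInstance, e, hesurj⟩
  obtain ⟨W, hW, q0, hq0⟩ := hfg e fgA fgB
  haveI := hW
  -- the distinguished element of the kernel pair
  set t1 : T.free.obj PUnit ⟶ A := ProperAux.extHom (fun _ => a₀) with ht1def
  set t2 : T.free.obj PUnit ⟶ A := ProperAux.extHom (fun _ => b₀) with ht2def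
  have ht : t1 ≫ e = t2 ≫ e := by
    apply ProperAux.free_hom_ext_s19
    intro z
    show e.f (t1.f (T.η.app PUnit z)) = e.f (t2.f (T.η.app PUnit z))
    rw [ht1def, ht2def, ProperAux.extHom_eta, ProperAux.extHom_eta]
    exact he_eq _ _ hab
  set lft : T.free.obj PUnit ⟶ pullback e e := pullback.lift t1 t2 ht with hlftdef
  set k₀ : (pullback e e).A := lft.f (T.η.app PUnit PUnit.unit) with hk₀def
  have hk₀1 : (pullback.fst e e).f k₀ = a₀ := by
    have h1 := ConcreteCategory.congr_hom (congrArg Monad.Algebra.Hom.f (pullback.lift_fst t1 t2 ht))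
      (T.η.app PUnit PUnit.unit)
    exact h1.trans (ProperAux.extHom_eta _ _)
  have hk₀2 : (pullback.snd e e).f k₀ = b₀ := by
    have h1 := ConcreteCategory.congr_hom (congrArg Monad.Algebra.Hom.f (pullback.lift_snd t1 t2 ht))
      (T.η.app PUnit PUnit.unit)
    exact h1.trans (ProperAux.extHom_eta _ _)
  -- a surjection from a free f.g. algebra onto the kernel pair hitting k₀
  set Z : Type := W ⊕ PUnit with hZdef
  set gq : Z → (pullback e e).A := fun z => Sum.rec (fun w => q0.f (T.η.app W w)) (fun _ => k₀) z
    with hgqdef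
  set q : T.free.obj Z ⟶ pullback e e := ProperAux.extHom gq with hqdef
  have hrestr : T.free.map (TypeCat.ofHom Sum.inl) ≫ q = q0 := by
    apply ProperAux.free_hom_ext_s19
    intro w
    show q.f ((T.free.map (TypeCat.ofHom Sum.inl)).f (T.η.app W w)) = q0.f (T.η.app W w)
    have : (T.free.map (TypeCat.ofHom Sum.inl)).f (T.η.app W w) = T.η.app Z (Sum.inl w) :=
      (ConcreteCategory.congr_hom (T.η.naturality (TypeCat.ofHom Sum.inl)) w).symm
    rw [this, hqdef, ProperAux.extHom_eta]
  have hqsurj : Function.Surjective q.f := by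
    intro k
    obtain ⟨t, ht'⟩ := hq0 k
    refine ⟨T.map (TypeCat.ofHom Sum.inl) t, ?_⟩
    have := ConcreteCategory.congr_hom (congrArg Monad.Algebra.Hom.f hrestr) t
    exact this.trans ht'
  have hqz₀ : q.f (T.η.app Z (Sum.inr PUnit.unit)) = k₀ := by
    rw [hqdef, ProperAux.extHom_eta]
  -- the two legs of the span
  set u : T.free.obj Z ⟶ A := q ≫ pullback.fst e e with hudef
  set v : T.free.obj Z ⟶ A := q ≫ pullback.snd e e with hvdef
  set az : Z → A.A := fun z => (pullback.fst e e).f (q.f (T.η.app Z z)) with hazdef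
  set bz : Z → A.A := fun z => (pullback.snd e e).f (q.f (T.η.app Z z)) with hbzdef
  have hhz : ∀ z, h.f (az z) = h.f (bz z) := by
    intro z
    apply hval
    exact ConcreteCategory.congr_hom (congrArg Monad.Algebra.Hom.f (pullback.condition (f := e) (g := e)))
      (q.f (T.η.app Z z))
  have hFh : ∀ z, (F.map h).f (c'.f (az z)) = (F.map h).f (c'.f (bz z)) := by
    intro z
    have hcoalg : ∀ a : A.A, (F.map h).f (c'.f a) = νF.str.f (h.f a) := fun a =>
      ConcreteCategory.congr_hom (congrArg Monad.Algebra.Hom.f (hν.from CA).h) a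
    rw [hcoalg, hcoalg, hhz z]
  -- the comparison morphism from the kernel pair of h to the kernel pair of e
  have hψcond : pullback.fst h h ≫ e = pullback.snd h h ≫ e := by
    apply Monad.Algebra.Hom.ext' _ _ _ _
    apply ConcreteCategory.hom_ext
    intro w
    show e.f ((pullback.fst h h).f w) = e.f ((pullback.snd h h).f w)
    apply he_eq
    exact ConcreteCategory.congr_hom (congrArg Monad.Algebra.Hom.f (pullback.condition (f := h) (g := h))) w
  set ψ : pullback h h ⟶ pullback e e := pullback.lift (pullback.fst h h) (pullback.snd h h)
    hψcond with hψdef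
  -- pick values for the coalgebra structure on the generators
  have key : ∀ z : Z, ∃ sz : (F.obj (T.free.obj Z)).A,
      (F.map (pullback.fst e e)).f ((F.map q).f sz) = c'.f (az z) ∧
      (F.map (pullback.snd e e)).f ((F.map q).f sz) = c'.f (bz z) := by
    intro z
    obtain ⟨k', hk1, hk2⟩ := hweak h (c'.f (az z)) (c'.f (bz z)) (hFh z)
    obtain ⟨sz, hsz⟩ := hsurj q hqsurj ((F.map ψ).f k')
    refine ⟨sz, ?_, ?_⟩
    · rw [hsz]
      have h5 : F.map ψ ≫ F.map (pullback.fst e e) = F.map (pullback.fst h h) := by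
        rw [← F.map_comp, pullback.lift_fst]
      exact (ConcreteCategory.congr_hom (congrArg Monad.Algebra.Hom.f h5) k').trans hk1
    · rw [hsz]
      have h5 : F.map ψ ≫ F.map (pullback.snd e e) = F.map (pullback.snd h h) := by
        rw [← F.map_comp, pullback.lift_snd]
      exact (ConcreteCategory.congr_hom (congrArg Monad.Algebra.Hom.f h5) k').trans hk2
  choose s₀ hs1 hs2 using key
  set s : T.free.obj Z ⟶ F.obj (T.free.obj Z) := ProperAux.extHom s₀ with hsdef
  -- u and v are coalgebra morphisms
  have hu : s ≫ F.map u = u ≫ c' := by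
    apply ProperAux.free_hom_ext_s19
    intro z
    show (F.map u).f (s.f (T.η.app Z z)) = c'.f (u.f (T.η.app Z z))
    rw [hsdef, ProperAux.extHom_eta]
    have h6 : F.map u = F.map q ≫ F.map (pullback.fst e e) := by rw [hudef, F.map_comp]
    exact (ConcreteCategory.congr_hom (congrArg Monad.Algebra.Hom.f h6) (s₀ z)).trans (hs1 z)
  have hv : s ≫ F.map v = v ≫ c' := by
    apply ProperAux.free_hom_ext_s19
    intro z
    show (F.map v).f (s.f (T.η.app Z z)) = c'.f (v.f (T.η.app Z z))
    rw [hsdef, ProperAux.extHom_eta]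
    have h6 : F.map v = F.map q ≫ F.map (pullback.snd e e) := by rw [hvdef, F.map_comp]
    exact (ConcreteCategory.congr_hom (congrArg Monad.Algebra.Hom.f h6) (s₀ z)).trans (hs2 z)
  -- assemble the zig-zag
  let CAobj : ObjectProperty.FullSubcategory (Pffg T F) := ffgObj T F (X ⊕ Y) inferInstance c'
  let CZobj : ObjectProperty.FullSubcategory (Pffg T F) := ffgObj T F Z inferInstance s
  have step1 : ∃ m : ffgObj T F X hX c ⟶ CAobj, m.hom.f.f (T.η.app X x) = a₀ :=
    ⟨⟨⟨jX, hjX⟩⟩, heta x⟩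
  have step2 : ∃ m : CZobj ⟶ CAobj, m.hom.f.f (T.η.app Z (Sum.inr PUnit.unit)) = a₀ := by
    refine ⟨⟨⟨u, hu⟩⟩, ?_⟩
    show (pullback.fst e e).f (q.f (T.η.app Z (Sum.inr PUnit.unit))) = a₀
    rw [hqz₀, hk₀1]
  have step3 : ∃ m : CZobj ⟶ CAobj, m.hom.f.f (T.η.app Z (Sum.inr PUnit.unit)) = b₀ := by
    refine ⟨⟨⟨v, hv⟩⟩, ?_⟩
    show (pullback.snd e e).f (q.f (T.η.app Z (Sum.inr PUnit.unit))) = b₀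
    rw [hqz₀, hk₀2]
  have step4 : ∃ m : ffgObj T F Y hY d ⟶ CAobj, m.hom.f.f (T.η.app Y y) = b₀ :=
    ⟨⟨⟨jY, hjY⟩⟩, hetaY y⟩
  show Relation.EqvGen _ _ _
  refine Relation.EqvGen.trans _ (⟨CAobj, a₀⟩ :
      Σ C : ObjectProperty.FullSubcategory (Pffg T F), C.obj.V.A) _
    (Relation.EqvGen.rel _ _ step1) ?_
  refine Relation.EqvGen.trans _ (⟨CZobj, T.η.app Z (Sum.inr PUnit.unit)⟩ :
      Σ C : ObjectProperty.FullSubcategory (Pffg T F), C.obj.V.A) _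
    (Relation.EqvGen.symm _ _ (Relation.EqvGen.rel _ _ step2)) ?_
  refine Relation.EqvGen.trans _ (⟨CAobj, b₀⟩ :
      Σ C : ObjectProperty.FullSubcategory (Pffg T F), C.obj.V.A) _
    (Relation.EqvGen.rel _ _ step3) ?_
  exact Relation.EqvGen.symm _ _ (Relation.EqvGen.rel _ _ step4)
end
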